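/- arXiv:1108.5641 — 6 statements merged into one kernel-verified Lean document; each statement's English description precedes it below -/
import Mathlib

section
/- Let G be a torsion-free CSA group all of whose abelian subgroups are cyclic, and let A be a nontrivial abelian subgroup of G. Then racl(A) = acl(A) = acl^∃(A) = dcl^∃(A) = dcl(A) = rdcl(A) = C_G(A), the centralizer of A in G. -/
open FirstOrder Filter

/-! Common definitions: the first-order language of groups, algebraic/definable closures,
free products, amalgams, HNN extensions, etc. -/

/-- Function symbols of the language of groups: `1`, `⁻¹`, `·`. -/
inductive GrpFunc : ℕ → Type
  | one : GrpFunc 0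
  | inv : GrpFunc 1
  | mul : GrpFunc 2

/-- The first-order language of groups `L = {·, ⁻¹, 1}` (no relation symbols). -/
def grpLang : FirstOrder.Language := ⟨GrpFunc, fun _ => Empty⟩

/-- Every group is a `grpLang`-structure in the natural way. -/
instance grpStructure (G : Type*) [Group G] : grpLang.Structure G where
  funMap {_} f := match f with
    | .one => fun _ => (1 : G)
    | .inv => fun x => (x 0)⁻¹
    | .mul => fun x => x 0 * x 1
  RelMap {_} r := Empty.elim r

/-- A formula is existential if it is obtained from a quantifier-free formula by
prefixing existential quantifiers. -/
def IsExistential {L : FirstOrder.Language} {α : Type*} (φ : L.Formula α) : Prop :=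
  ∃ (n : ℕ) (ψ : L.BoundedFormula α n), ψ.IsQF ∧ φ = ψ.exs

section ModelTheory

variable (L : FirstOrder.Language) {M : Type*} [L.Structure M]

/-- The algebraic closure of a set of parameters `A` in an `L`-structure `M`:
elements satisfying, together with only finitely many other elements, some formula
with parameters from `A`. -/
def Lacl (A : Set M) : Set M :=
  {b | ∃ φ : L.Formula (↥A ⊕ Fin 1),
    {c : M | φ.Realize (Sum.elim Subtype.val fun _ => c)}.Finite ∧
    φ.Realize (Sum.elim Subtype.val fun _ => b)}

/-- The definable closure of a set of parameters `A` in an `L`-structure `M`. -/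
def Ldcl (A : Set M) : Set M :=
  {b | ∃ φ : L.Formula (↥A ⊕ Fin 1),
    {c : M | φ.Realize (Sum.elim Subtype.val fun _ => c)} = {b}}

/-- The existential algebraic closure of `A` in `M`. -/
def LaclE (A : Set M) : Set M :=
  {b | ∃ φ : L.Formula (↥A ⊕ Fin 1), IsExistential φ ∧
    {c : M | φ.Realize (Sum.elim Subtype.val fun _ => c)}.Finite ∧
    φ.Realize (Sum.elim Subtype.val fun _ => b)}

/-- The existential definable closure of `A` in `M`. -/
def LdclE (A : Set M) : Set M :=
  {b | ∃ φ : L.Formula (↥A ⊕ Fin 1), IsExistential φ ∧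
    {c : M | φ.Realize (Sum.elim Subtype.val fun _ => c)} = {b}}

end ModelTheory

section GroupDefs

variable {G : Type*} [Group G]

/-- Algebraic closure in a group, w.r.t. the language of groups. -/
def acl (A : Set G) : Set G := Lacl grpLang A

/-- Definable closure in a group, w.r.t. the language of groups. -/
def dcl (A : Set G) : Set G := Ldcl grpLang A

/-- Existential algebraic closure in a group. -/
def aclE (A : Set G) : Set G := LaclE grpLang A

/-- Existential definable closure in a group. -/
def dclE (A : Set G) : Set G := LdclE grpLang A

/-- Restricted algebraic closure: elements with finite orbit under automorphisms
of `G` fixing `A` pointwise. -/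
def racl (A : Set G) : Set G :=
  {g | {x : G | ∃ f : G ≃* G, (∀ a ∈ A, f a = a) ∧ f g = x}.Finite}

/-- Restricted definable closure: elements fixed by every automorphism of `G`
fixing `A` pointwise. -/
def rdcl (A : Set G) : Set G :=
  {g | ∀ f : G ≃* G, (∀ a ∈ A, f a = a) → f g = g}

/-- A set of group elements is nonabelian (contains two non-commuting elements). -/
def Nonabelian (A : Set G) : Prop := ∃ x ∈ A, ∃ y ∈ A, x * y ≠ y * x

/-- `F` is a free group of finite rank. -/
def IsFreeOfFiniteRank (F : Type*) [Group F] : Prop :=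
  ∃ n : ℕ, Nonempty (F ≃* FreeGroup (Fin n))

/-- `G` is the internal free product of its subgroups `H` and `K`: the canonical
homomorphism from the abstract free product `H ∗ K` to `G` is an isomorphism. -/
def InternalFreeProduct (H K : Subgroup G) : Prop :=
  Function.Bijective (Monoid.Coprod.lift H.subtype K.subtype)

/-- `G` is freely indecomposable relative to its subgroup `A`. -/
def FreelyIndecomposableRel (A : Subgroup G) : Prop :=
  ¬ ∃ G₁ G₂ : Subgroup G, G₁ ≠ ⊥ ∧ G₂ ≠ ⊥ ∧ A ≤ G₁ ∧ InternalFreeProduct G₁ G₂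

/-- `B` is a free factor of the subgroup `K`: there is `L` such that the canonical
homomorphism from the abstract free product `B ∗ L` to the ambient group is injective
with image exactly `K`. -/
def IsFreeFactorOf (B K : Subgroup G) : Prop :=
  ∃ L : Subgroup G,
    Function.Injective (Monoid.Coprod.lift B.subtype L.subtype) ∧
    (Monoid.Coprod.lift B.subtype L.subtype).range = K

/-- `K'` is the amalgamated free product `K ∗_C B` inside the ambient group `G`:
the canonical homomorphism from the abstract amalgamated product (pushout) of `K` and
`B` over `C` to `G` is injective with image exactly `K'`. -/
def IsAmalgamOf (K B C : Subgroup G) (hCK : C ≤ K) (hCB : C ≤ B) (K' : Subgroup G) : Prop :=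
  ∃ ℓ : Monoid.PushoutI
      (fun i : Bool =>
        (Subgroup.inclusion (show C ≤ cond i K B by cases i <;> assumption) :
          ↥C →* ↥(cond i K B))) →* G,
    (∀ i : Bool, ℓ.comp (Monoid.PushoutI.of i) = (cond i K B).subtype) ∧
    Function.Injective ℓ ∧ ℓ.range = K'

/-- `K'` is the HNN extension of `K` along `φ : C ≃* D` inside the ambient group `G`:
the canonical homomorphism from the abstract HNN extension of `K` along `φ` to `G` is
injective with image exactly `K'` (and is the inclusion on `K`). -/
def IsHNNOf (K : Subgroup G) {C D : Subgroup ↥K} (φ : ↥C ≃* ↥D) (K' : Subgroup G) : Prop :=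
  ∃ ℓ : HNNExtension ↥K C D φ →* G,
    ℓ.comp HNNExtension.of = K.subtype ∧ Function.Injective ℓ ∧ ℓ.range = K'

/-- One constructibility step: `K'` is an amalgamated free product of `K` with some
subgroup over a cyclic subgroup, or an HNN extension of `K` along an isomorphism of two
cyclic subgroups of `K`. -/
def ConstructStep (K K' : Subgroup G) : Prop :=
  (∃ (B C : Subgroup G) (hCK : C ≤ K) (hCB : C ≤ B),
      (∃ c : G, C = Subgroup.zpowers c) ∧ B ≤ K' ∧ K ≤ K' ∧ IsAmalgamOf K B C hCK hCB K')
  ∨ (∃ (C D : Subgroup ↥K) (φ : ↥C ≃* ↥D),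
      (∃ c : ↥K, C = Subgroup.zpowers c) ∧ (∃ d : ↥K, D = Subgroup.zpowers d) ∧ IsHNNOf K φ K')

/-- `B` is constructible from `A` by a finite sequence of amalgamated free products and
HNN-extensions along cyclic subgroups. -/
def ConstructibleFrom (A B : Subgroup G) : Prop := Relation.ReflTransGen ConstructStep A B

/-- The rank of a subgroup: the least cardinality of a generating set. For (subgroups of)
free groups this is the cardinality of a basis. -/
noncomputable def srank (H : Subgroup G) : Cardinal :=
  sInf {c : Cardinal | ∃ S : Set G, Subgroup.closure S = H ∧ c = Cardinal.mk ↥S}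

/-- `M` is a maximal abelian subgroup. -/
def IsMaxAbelian (M : Subgroup G) : Prop :=
  (∀ x ∈ M, ∀ y ∈ M, x * y = y * x) ∧
  ∀ N : Subgroup G, (∀ x ∈ N, ∀ y ∈ N, x * y = y * x) → M ≤ N → M = N

/-- `M` is a maximal abelian subgroup of the subgroup `H`. -/
def IsMaxAbelianIn (M H : Subgroup G) : Prop :=
  M ≤ H ∧ (∀ x ∈ M, ∀ y ∈ M, x * y = y * x) ∧
  ∀ N : Subgroup G, N ≤ H → (∀ x ∈ N, ∀ y ∈ N, x * y = y * x) → M ≤ N → M = N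

/-- `M` is a malnormal subgroup: `gMg⁻¹ ∩ M = 1` for every `g ∉ M`. -/
def Malnormal (M : Subgroup G) : Prop :=
  ∀ g : G, g ∉ M → ∀ x ∈ M, g * x * g⁻¹ ∈ M → x = 1

/-- A group is CSA if every maximal abelian subgroup is malnormal. -/
def IsCSA (G : Type*) [Group G] : Prop := ∀ M : Subgroup G, IsMaxAbelian M → Malnormal M

/-- Every abelian subgroup of `G` is cyclic. -/
def AbelianSubgroupsCyclic (G : Type*) [Group G] : Prop :=
  ∀ H : Subgroup G, (∀ x ∈ H, ∀ y ∈ H, x * y = y * x) → ∃ g : G, H = Subgroup.zpowers g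

/-- `G` is equationally noetherian: every system of equations over `G` in finitely many
variables is equivalent to a finite subsystem. -/
def EqNoetherian (G : Type*) [Group G] : Prop :=
  ∀ n : ℕ, 0 < n → ∀ S : Set (Monoid.Coprod G (FreeGroup (Fin n))),
    ∃ S₀ : Set (Monoid.Coprod G (FreeGroup (Fin n))), S₀ ⊆ S ∧ S₀.Finite ∧
      ∀ f : Monoid.Coprod G (FreeGroup (Fin n)) →* G,
        f.comp Monoid.Coprod.inl = MonoidHom.id G →
        ((∀ s ∈ S₀, f s = 1) ↔ ∀ s ∈ S, f s = 1)

/-- A group homomorphism is elementary w.r.t. the language of groups: it preserves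
and reflects all first-order formulas. -/
def ElementaryEmb {H K : Type*} [Group H] [Group K] (e : H →* K) : Prop :=
  ∀ (n : ℕ) (φ : grpLang.Formula (Fin n)) (v : Fin n → H),
    (φ.Realize fun i => e (v i)) ↔ φ.Realize v

/-- The inclusion of the subgroup `H` is an elementary embedding; i.e. the ambient group
is an elementary extension of `H`. -/
def ElementarySub (H : Subgroup G) : Prop := ElementaryEmb H.subtype

/-- A sequence of homomorphisms is stable. -/
def StableSeq {K H : Type*} [Group K] [Group H] (h : ℕ → (K →* H)) : Prop :=
  ∀ k : K, (∀ᶠ n in Filter.atTop, h n k = 1) ∨ (∀ᶠ n in Filter.atTop, h n k ≠ 1)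

/-- A sequence of homomorphisms has trivial stable kernel. -/
def TrivialStableKernel {K H : Type*} [Group K] [Group H] (h : ℕ → (K →* H)) : Prop :=
  ∀ k : K, (∀ᶠ n in Filter.atTop, h n k = 1) → k = 1

/-- A stable sequence of homomorphisms `g n : D → H` with trivial stable kernel strongly
converges to `D`, where `D` is a subgroup of an extension of the base group `H`, the base
group being embedded via `e`. -/
def StronglyConverges {H Gs : Type*} [Group H] [Group Gs] (e : H →* Gs)
    (D : Subgroup Gs) (g : ℕ → (↥D →* H)) : Prop :=
  StableSeq g ∧ TrivialStableKernel g ∧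
  (∀ (d : ↥D) (b : H), (d : Gs) = e b → ∀ᶠ n in Filter.atTop, g n d = b) ∧
  (∀ (d : ↥D) (b : H), (∃ᶠ n in Filter.atTop, g n d = b) → (d : Gs) = e b)

/-- The ball of radius `r` about the identity in the word metric w.r.t. `S`. -/
def wordBall (S : Set G) (r : ℕ) : Set G :=
  {g | ∃ l : List G, l.length ≤ r ∧ (∀ x ∈ l, x ∈ S ∨ x⁻¹ ∈ S) ∧ l.prod = g}

end GroupDefs

/-- A monoid is torsion-free if every non-identity element has infinite order
(the old Mathlib `Monoid.IsTorsionFree`, removed since). -/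
def Monoid.IsTorsionFree (G : Type*) [Monoid G] : Prop :=
  ∀ g : G, g ≠ 1 → ¬IsOfFinOrder g

/-! ### Auxiliary lemmas for Statement 9 -/

section Aux

variable {G : Type*} [Group G]

private theorem aux_exists_maxAbelian (a : G) :
    ∃ M : Subgroup G, (∀ x ∈ M, ∀ y ∈ M, x * y = y * x) ∧ a ∈ M ∧
      ∀ N : Subgroup G, (∀ x ∈ N, ∀ y ∈ N, x * y = y * x) → M ≤ N → M = N := by
  set s : Set (Subgroup G) := {H | ∀ x ∈ H, ∀ y ∈ H, x * y = y * x} with hs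
  have hza : Subgroup.zpowers a ∈ s := by
    intro x hx y hy
    obtain ⟨n, rfl⟩ := hx
    obtain ⟨m, rfl⟩ := hy
    exact (Commute.refl a).zpow_zpow n m
  have hchainub : ∀ c ⊆ s, IsChain (· ≤ ·) c → ∀ y ∈ c, ∃ ub ∈ s, ∀ z ∈ c, z ≤ ub := by
    intro c hcs hchain y hy
    refine ⟨sSup c, ?_, fun z hz => le_sSup hz⟩
    intro x hx y' hy'
    rw [Subgroup.mem_sSup_of_directedOn ⟨y, hy⟩ hchain.directedOn] at hx hy'
    obtain ⟨H1, h1c, hx⟩ := hx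
    obtain ⟨H2, h2c, hy'⟩ := hy'
    rcases hchain.total h1c h2c with h | h
    · exact hcs h2c x (h hx) y' hy'
    · exact hcs h1c x hx y' (h hy')
  obtain ⟨M, hle, hMs, hmax⟩ := zorn_le_nonempty₀ s hchainub (Subgroup.zpowers a) hza
  exact ⟨M, hMs, hle (Subgroup.mem_zpowers a), fun N hN hMN => le_antisymm hMN (hmax hN hMN)⟩

/-- Commutation transitivity in CSA groups. -/
private theorem aux_comm_trans (hCSA : IsCSA G) {a : G} (ha : a ≠ 1) {x y : G}
    (hx : x * a = a * x) (hy : y * a = a * y) : x * y = y * x := by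
  obtain ⟨M, hMab, haM, hMmax⟩ := aux_exists_maxAbelian a
  have hmal : Malnormal M := hCSA M ⟨hMab, hMmax⟩
  have key : ∀ z : G, z * a = a * z → z ∈ M := by
    intro z hz
    by_contra h
    exact ha (hmal z h a haM (by rw [show z * a * z⁻¹ = a by rw [hz]; group]; exact haM))
  exact hMab x (key x hx) y (key y hy)

/-- A group automorphism as an equivalence of `grpLang`-structures. -/
private def auxLEquiv (f : G ≃* G) : G ≃[grpLang] G where
  toEquiv := f.toEquiv
  map_fun' := by
    intro n F x
    cases F with
    | one => exact map_one f
    | inv => exact map_inv f _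
    | mul => exact map_mul f _ _
  map_rel' := by intro n r _; exact r.elim

private theorem aux_realize_fix {A : Set G} (f : G ≃* G) (hf : ∀ a ∈ A, f a = a)
    (φ : grpLang.Formula (↥A ⊕ Fin 1)) (b : G) :
    φ.Realize (Sum.elim (Subtype.val : ↥A → G) fun _ => f b) ↔
      φ.Realize (Sum.elim (Subtype.val : ↥A → G) fun _ => b) := by
  have h := FirstOrder.Language.StrongHomClass.realize_formula (auxLEquiv f) φ
    (v := Sum.elim (Subtype.val : ↥A → G) fun _ => b)
  rw [← h]
  have he : (⇑(auxLEquiv f) ∘ Sum.elim (Subtype.val : ↥A → G) fun _ => b : ↥A ⊕ Fin 1 → G) =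
      (Sum.elim (Subtype.val : ↥A → G) fun _ => f b : ↥A ⊕ Fin 1 → G) := by
    funext i
    cases i with
    | inl a => exact hf a a.2
    | inr _ => rfl
  rw [he]

/-- Term-level multiplication. -/
private def tmul {α : Type*} (s t : grpLang.Term α) : grpLang.Term α :=
  FirstOrder.Language.Term.func GrpFunc.mul ![s, t]

/-- Term-level natural power. -/
private def tpow {α : Type*} (t : grpLang.Term α) : ℕ → grpLang.Term α
  | 0 => FirstOrder.Language.Term.func GrpFunc.one ![]
  | n + 1 => tmul (tpow t n) t

private theorem realize_tmul {α : Type*} (v : α → G) (s t : grpLang.Term α) :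
    (tmul s t).realize v = s.realize v * t.realize v := rfl

private theorem realize_tpow {α : Type*} (v : α → G) (t : grpLang.Term α) (n : ℕ) :
    (tpow t n).realize v = t.realize v ^ n := by
  induction n with
  | zero => rw [pow_zero]; rfl
  | succ n ih => rw [tpow, realize_tmul, ih, pow_succ]

end Aux

/-- Let `G` be a torsion-free CSA group all of whose abelian subgroups
are cyclic, and `A` a nontrivial abelian subgroup of `G`. Then
`racl(A) = acl(A) = acl^∃(A) = dcl^∃(A) = dcl(A) = rdcl(A) = C_G(A)`. -/
theorem closures_of_abelian_eq_centralizer {G : Type*} [Group G]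
    (hTF : Monoid.IsTorsionFree G) (hCSA : IsCSA G) (hcyc : AbelianSubgroupsCyclic G)
    (A : Subgroup G) (hA : A ≠ ⊥) (hab : ∀ x ∈ A, ∀ y ∈ A, x * y = y * x) :
    racl (A : Set G) = (Subgroup.centralizer (A : Set G) : Set G) ∧
    acl (A : Set G) = (Subgroup.centralizer (A : Set G) : Set G) ∧
    aclE (A : Set G) = (Subgroup.centralizer (A : Set G) : Set G) ∧
    dclE (A : Set G) = (Subgroup.centralizer (A : Set G) : Set G) ∧
    dcl (A : Set G) = (Subgroup.centralizer (A : Set G) : Set G) ∧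
    rdcl (A : Set G) = (Subgroup.centralizer (A : Set G) : Set G) := by
  classical
  obtain ⟨a₀, ha₀A, ha₀⟩ : ∃ x ∈ A, x ≠ (1:G) := by
    rw [Subgroup.ne_bot_iff_exists_ne_one] at hA
    obtain ⟨⟨x, hx⟩, hx1⟩ := hA
    exact ⟨x, hx, by simpa using hx1⟩
  set C := Subgroup.centralizer (A : Set G) with hCdef
  have hCab : ∀ x ∈ C, ∀ y ∈ C, x * y = y * x := by
    intro x hx y hy
    exact aux_comm_trans hCSA ha₀ (Subgroup.mem_centralizer_iff.1 hx a₀ ha₀A).symm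
      (Subgroup.mem_centralizer_iff.1 hy a₀ ha₀A).symm
  obtain ⟨c, hCc⟩ := hcyc C hCab
  have haC : a₀ ∈ C := Subgroup.mem_centralizer_iff.2 fun y hy => hab y hy a₀ ha₀A
  have hcC : c ∈ C := by rw [hCc]; exact Subgroup.mem_zpowers c
  have hc1 : c ≠ 1 := by
    rintro rfl
    rw [hCc, Subgroup.zpowers_one_eq_bot, Subgroup.mem_bot] at haC
    exact ha₀ haC
  have hinj : Function.Injective fun n : ℤ => c ^ n :=
    injective_zpow_iff_not_isOfFinOrder.2 (hTF c hc1)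
  obtain ⟨e, hae⟩ : ∃ e : ℤ, c ^ e = a₀ := by
    rw [hCc] at haC; exact Subgroup.mem_zpowers_iff.1 haC
  have he0 : e ≠ 0 := by
    rintro rfl
    exact ha₀ (by simpa using hae.symm)
  set k : ℕ := e.natAbs with hk
  have hk0 : k ≠ 0 := Int.natAbs_ne_zero.2 he0
  set a : G := if 0 ≤ e then a₀ else a₀⁻¹ with hadef
  have haA : a ∈ A := by
    by_cases h : 0 ≤ e
    · rw [hadef, if_pos h]; exact ha₀A
    · rw [hadef, if_neg h]; exact A.inv_mem ha₀A
  have ha1 : a ≠ 1 := by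
    by_cases h : 0 ≤ e
    · rw [hadef, if_pos h]; exact ha₀
    · rw [hadef, if_neg h]; exact fun hh => ha₀ (by rw [← inv_inv a₀, hh, inv_one])
  have hack : c ^ (k : ℤ) = a := by
    by_cases h : 0 ≤ e
    · rw [hadef, if_pos h, ← hae]; congr 1; omega
    · rw [hadef, if_neg h, ← hae, ← zpow_neg]; congr 1; omega
  have memC_iff : ∀ x : G, x ∈ C ↔ x * a = a * x := by
    intro x
    constructor
    · intro hx; exact (Subgroup.mem_centralizer_iff.1 hx a haA).symm
    · intro hx
      refine Subgroup.mem_centralizer_iff.2 fun y hy => ?_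
      exact (aux_comm_trans hCSA ha1 hx (by
        have := hab y hy a haA; exact this.symm ▸ (hab y hy a haA))).symm
  -- `racl ⊆ C`
  have hraclC : racl (A : Set G) ⊆ (C : Set G) := by
    intro g hg
    by_contra hgC
    have horb : ∀ n : ℤ, c ^ n * g * (c ^ n)⁻¹ ∈
        {x : G | ∃ f : G ≃* G, (∀ a' ∈ (A : Set G), f a' = a') ∧ f g = x} := by
      intro n
      refine ⟨MulAut.conj (c ^ n), ?_, by rw [MulAut.conj_apply]⟩
      intro a' ha'
      have hca' : a' * c = c * a' := Subgroup.mem_centralizer_iff.1 hcC a' ha'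
      have hcomm : Commute (c ^ n) a' := (Commute.zpow_left (Commute.symm (show Commute a' c from hca')) n)
      rw [MulAut.conj_apply, hcomm.eq, mul_assoc, mul_inv_cancel, mul_one]
    have hinj2 : Function.Injective fun n : ℤ => c ^ n * g * (c ^ n)⁻¹ := by
      intro n m hnm
      by_contra hne
      simp only at hnm
      set u : G := c ^ (n - m) with hu
      set w : G := c ^ m * g * (c ^ m)⁻¹ with hw
      have hu1 : u ≠ 1 := by
        intro h
        have : n - m = 0 := hinj (by simpa [hu] using h)
        omega
      have hcn : c ^ n = u * c ^ m := by rw [hu, ← zpow_add]; congr 1; omega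
      have huw : u * w * u⁻¹ = w := by
        calc u * (c ^ m * g * (c ^ m)⁻¹) * u⁻¹ = (u * c ^ m) * g * (u * c ^ m)⁻¹ := by group
        _ = c ^ n * g * (c ^ n)⁻¹ := by rw [← hcn]
        _ = w := hnm
      have hwu : w * u = u * w := by
        have h' := congrArg (· * u) huw
        simpa [mul_assoc] using h'.symm
      have hau : a * u = u * a := by
        rw [← hack, hu, ← zpow_add, ← zpow_add, add_comm]
      have hwa : w * a = a * w := aux_comm_trans hCSA hu1 hwu hau
      have hwC : w ∈ C := (memC_iff w).2 hwa
      have hgC' : g ∈ C := by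
        have hg' : g = (c ^ m)⁻¹ * w * c ^ m := by rw [hw]; group
        rw [hg']
        exact C.mul_mem (C.mul_mem (C.inv_mem (C.zpow_mem hcC m)) hwC) (C.zpow_mem hcC m)
      exact hgC hgC'
    exact (Set.infinite_of_injective_forall_mem hinj2 horb) hg
  -- easy inclusions between closures
  have haclracl : acl (A : Set G) ⊆ racl (A : Set G) := by
    rintro b ⟨φ, hfin, hb⟩
    refine Set.Finite.subset hfin ?_
    rintro x ⟨f, hfA, rfl⟩
    exact (aux_realize_fix f hfA φ b).2 hb
  have hrdclracl : rdcl (A : Set G) ⊆ racl (A : Set G) := by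
    intro g hg
    refine Set.Finite.subset (Set.finite_singleton g) ?_
    rintro x ⟨f, hfA, rfl⟩
    exact hg f hfA
  have hdclrdcl : dcl (A : Set G) ⊆ rdcl (A : Set G) := by
    rintro b ⟨φ, hset⟩ f hfA
    have hb : b ∈ ({b} : Set G) := rfl
    rw [← hset] at hb
    have hfb : f b ∈ {c : G | φ.Realize (Sum.elim Subtype.val fun _ => c)} :=
      (aux_realize_fix f hfA φ b).2 hb
    rw [hset] at hfb
    exact hfb
  have hdclEdcl : dclE (A : Set G) ⊆ dcl (A : Set G) := by
    rintro b ⟨φ, _, hset⟩; exact ⟨φ, hset⟩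
  have hdclEaclE : dclE (A : Set G) ⊆ aclE (A : Set G) := by
    rintro b ⟨φ, hex, hset⟩
    refine ⟨φ, hex, by rw [hset]; exact Set.finite_singleton b, ?_⟩
    have : b ∈ {c : G | φ.Realize (Sum.elim Subtype.val fun _ => c)} := by rw [hset]; rfl
    exact this
  have haclEacl : aclE (A : Set G) ⊆ acl (A : Set G) := by
    rintro b ⟨φ, _, hfin, hb⟩; exact ⟨φ, hfin, hb⟩
  -- `C ⊆ dclE`
  have hCdclE : (C : Set G) ⊆ dclE (A : Set G) := by
    intro g hgC
    obtain ⟨m, hm⟩ : ∃ m : ℤ, c ^ m = g := by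
      rw [hCc] at hgC; exact Subgroup.mem_zpowers_iff.1 hgC
    have hbA : a ^ m ∈ A := A.zpow_mem haA m
    let xa : grpLang.Term (↥(A : Set G) ⊕ Fin 1) :=
      FirstOrder.Language.Term.var (Sum.inl ⟨a, haA⟩)
    let xb : grpLang.Term (↥(A : Set G) ⊕ Fin 1) :=
      FirstOrder.Language.Term.var (Sum.inl ⟨a ^ m, hbA⟩)
    let xx : grpLang.Term (↥(A : Set G) ⊕ Fin 1) :=
      FirstOrder.Language.Term.var (Sum.inr 0)
    refine ⟨FirstOrder.Language.Term.equal (tmul xx xa) (tmul xa xx) ⊓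
        FirstOrder.Language.Term.equal (tpow xx k) xb, ⟨0, _, ?_, rfl⟩, ?_⟩
    · exact (FirstOrder.Language.BoundedFormula.IsQF.of_isAtomic
        (FirstOrder.Language.BoundedFormula.IsAtomic.equal _ _)).inf
        (FirstOrder.Language.BoundedFormula.IsQF.of_isAtomic
        (FirstOrder.Language.BoundedFormula.IsAtomic.equal _ _))
    · ext x
      have hreal : ((FirstOrder.Language.Term.equal (tmul xx xa) (tmul xa xx) ⊓
          FirstOrder.Language.Term.equal (tpow xx k) xb) :
          grpLang.Formula (↥(A : Set G) ⊕ Fin 1)).Realize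
            (Sum.elim Subtype.val fun _ => x) ↔ (x * a = a * x ∧ x ^ k = a ^ m) := by
        simp [FirstOrder.Language.Formula.realize_inf, FirstOrder.Language.Formula.realize_equal,
          realize_tmul, realize_tpow, xa, xb, xx]
      have hgsat : g * a = a * g ∧ g ^ k = a ^ m := by
        refine ⟨(memC_iff g).1 hgC, ?_⟩
        calc g ^ k = c ^ (m * (k : ℤ)) := by rw [← hm, ← zpow_natCast, ← zpow_mul]
        _ = c ^ ((k : ℤ) * m) := by rw [mul_comm]
        _ = a ^ m := by rw [← hack, ← zpow_mul]
      rw [Set.mem_setOf_eq, hreal, Set.mem_singleton_iff]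
      constructor
      · rintro ⟨hx1, hx2⟩
        have hxC : x ∈ C := (memC_iff x).2 hx1
        obtain ⟨j, hj⟩ : ∃ j : ℤ, c ^ j = x := by
          rw [hCc] at hxC; exact Subgroup.mem_zpowers_iff.1 hxC
        have hjk : c ^ (j * (k : ℤ)) = c ^ (m * (k : ℤ)) := by
          have e1 : c ^ (j * (k : ℤ)) = x ^ k := by rw [zpow_mul, hj, zpow_natCast]
          have e2 : c ^ (m * (k : ℤ)) = a ^ m := by
            rw [mul_comm, zpow_mul, hack]
          rw [e1, e2, hx2]
        have hjm : j = m := by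
          have := hinj hjk
          have hkz : (k : ℤ) ≠ 0 := by exact_mod_cast hk0
          exact mul_right_cancel₀ hkz this
        rw [← hj, hjm, hm]
      · intro hx
        subst hx
        exact hgsat
  -- assembly
  refine ⟨?_, ?_, ?_, ?_, ?_, ?_⟩
  · exact Set.Subset.antisymm hraclC
      (hCdclE.trans (hdclEdcl.trans (hdclrdcl.trans hrdclracl)))
  · exact Set.Subset.antisymm (haclracl.trans hraclC)
      (hCdclE.trans (hdclEaclE.trans haclEacl))
  · exact Set.Subset.antisymm ((haclEacl.trans haclracl).trans hraclC)
      (hCdclE.trans hdclEaclE)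
  · exact Set.Subset.antisymm
      ((hdclEdcl.trans (hdclrdcl.trans hrdclracl)).trans hraclC) hCdclE
  · exact Set.Subset.antisymm ((hdclrdcl.trans hrdclracl).trans hraclC)
      (hCdclE.trans hdclEdcl)
  · exact Set.Subset.antisymm (hrdclracl.trans hraclC)
      (hCdclE.trans (hdclEdcl.trans hdclrdcl))
end

section
/- Let G be a torsion-free CSA group and A a subgroup of G. Suppose G = G₁ ∗_C G₂ is an amalgamated free product over an abelian subgroup C that is a maximal abelian subgroup of G₁ and a maximal abelian subgroup of G₂, and suppose A ≤ G₁. Then racl_G(A) ≤ G₁; in particular acl(A) ≤ G₁. -/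
open FirstOrder Filter

section CSAAux

variable {G : Type*} [Group G]

theorem exists_le_maxAbelian (C : Subgroup G) (hab : ∀ x ∈ C, ∀ y ∈ C, x * y = y * x) :
    ∃ M : Subgroup G, C ≤ M ∧ IsMaxAbelian M := by
  obtain ⟨M, hCM, hMmax⟩ := zorn_le_nonempty₀
    {H : Subgroup G | (∀ x ∈ H, ∀ y ∈ H, x * y = y * x) ∧ C ≤ H}
    (fun c hcs hchain y hy => by
      refine ⟨sSup c, ⟨⟨?_, ?_⟩, fun z hz => le_sSup hz⟩⟩
      · intro x hx y' hy'
        rw [Subgroup.mem_sSup_of_directedOn ⟨y, hy⟩ hchain.directedOn] at hx hy'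
        obtain ⟨H₁, h1c, hx1⟩ := hx
        obtain ⟨H₂, h2c, hy2⟩ := hy'
        rcases hchain.total h1c h2c with h | h
        · exact (hcs h2c).1 x (h hx1) y' hy2
        · exact (hcs h1c).1 x hx1 y' (h hy2)
      · exact (hcs hy).2.trans (le_sSup hy)) C ⟨hab, le_rfl⟩
  refine ⟨M, hCM, hMmax.1.1, ?_⟩
  intro N hN hMN
  exact le_antisymm hMN (hMmax.2 ⟨hN, hMmax.1.2.trans hMN⟩ hMN)

theorem star_lemma (hCSA : IsCSA G) {G₂ C : Subgroup G} (h₂ : C ≤ G₂)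
    (hab : ∀ x ∈ C, ∀ y ∈ C, x * y = y * x) (hmax₂ : IsMaxAbelianIn C G₂) :
    ∀ m ∈ C, m ≠ (1 : G) → ∀ y ∈ G₂, y⁻¹ * m * y ∈ C → y ∈ C := by
  obtain ⟨M, hCM, hM⟩ := exists_le_maxAbelian C hab
  intro m hm hm1 y hy hconj
  by_cases hyM : y⁻¹ ∈ M
  · have hyM' : y ∈ M := by simpa using M.inv_mem hyM
    have hCN := hmax₂.2.2 (M ⊓ G₂) inf_le_right
      (fun a ha b hb => hM.1 a ha.1 b hb.1) (le_inf hCM h₂)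
    rw [hCN]
    exact ⟨hyM', hy⟩
  · exact absurd (hCSA M hM y⁻¹ hyM m (hCM hm) (by rw [inv_inv]; exact hCM hconj)) hm1

end CSAAux

section ModelAux

variable {G : Type*} [Group G]

/-- A group automorphism as an equivalence of `grpLang`-structures. -/
def mulEquivLEquiv (f : G ≃* G) : grpLang.Equiv G G where
  toEquiv := f.toEquiv
  map_fun' := by
    intro n F x
    cases F with
    | one => exact map_one f
    | inv => exact map_inv f (x 0)
    | mul => exact map_mul f (x 0) (x 1)
  map_rel' := by intro n r; exact r.elim

theorem acl_subset_racl (A : Set G) : acl A ⊆ racl A := by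
  rintro b ⟨ψ, hfin, hb⟩
  refine Set.Finite.subset hfin ?_
  rintro x ⟨f, hfA, rfl⟩
  have key : (⇑(mulEquivLEquiv f)) ∘ ((Sum.elim Subtype.val fun _ => b : ↥A ⊕ Fin 1 → G))
      = (Sum.elim Subtype.val fun _ => f b : ↥A ⊕ Fin 1 → G) := by
    funext s
    cases s with
    | inl a => exact hfA a.1 a.2
    | inr j => rfl
  have h := FirstOrder.Language.StrongHomClass.realize_formula (mulEquivLEquiv f) ψ
    (v := (Sum.elim Subtype.val fun _ => b : ↥A ⊕ Fin 1 → G))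
  rw [key] at h
  exact h.mpr hb

end ModelAux

section AmalgamAux

open Monoid PushoutI

namespace RaclAux

variable {G : Type*} [Group G] {G₁ G₂ C : Subgroup G}
  (φ : ∀ i : Bool, ↥C →* ↥(cond i G₁ G₂))

/-- conjugation of the factor letters -/
def tc (m : ↥C) : ∀ i : Bool, ↥(cond i G₁ G₂) ≃* ↥(cond i G₁ G₂) :=
  fun i => match i with
  | true => MulEquiv.refl _
  | false => MulAut.conj (φ false m)

theorem tc_false_coe (hφcoe : ∀ (i : Bool) (c : ↥C), ((φ i c : ↥(cond i G₁ G₂)) : G) = (c : G))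
    (m : ↥C) (x : ↥(cond false G₁ G₂)) :
    ((tc φ m false x : ↥(cond false G₁ G₂)) : G) = (m : G) * (x : G) * (m : G)⁻¹ := by
  show (((φ false m) * x * (φ false m)⁻¹ : ↥(cond false G₁ G₂)) : G) = _
  push_cast
  rw [hφcoe]

theorem φinj (hφcoe : ∀ (i : Bool) (c : ↥C), ((φ i c : ↥(cond i G₁ G₂)) : G) = (c : G)) :
    ∀ i, Function.Injective (φ i) := by
  intro i a b h
  have h2 := congrArg (fun x : ↥(cond i G₁ G₂) => (x : G)) h
  simp only [hφcoe] at h2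
  exact Subtype.ext h2

theorem mem_range_iff (hφcoe : ∀ (i : Bool) (c : ↥C), ((φ i c : ↥(cond i G₁ G₂)) : G) = (c : G))
    (i : Bool) (y : ↥(cond i G₁ G₂)) :
    y ∈ (φ i).range ↔ (y : G) ∈ C := by
  constructor
  · rintro ⟨c, rfl⟩
    rw [hφcoe]
    exact c.2
  · intro h
    exact ⟨⟨(y : G), h⟩, Subtype.ext (hφcoe i ⟨(y : G), h⟩)⟩

theorem tc_comp (hφcoe : ∀ (i : Bool) (c : ↥C), ((φ i c : ↥(cond i G₁ G₂)) : G) = (c : G))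
    (hab : ∀ x ∈ C, ∀ y ∈ C, x * y = y * x) (m : ↥C) (i : Bool) :
    ((PushoutI.of (φ := φ) i).comp (tc φ m i).toMonoidHom).comp (φ i) = PushoutI.base φ := by
  ext c
  simp only [MonoidHom.comp_apply, MulEquiv.toMonoidHom_eq_coe, MonoidHom.coe_coe]
  cases i
  · have h : tc φ m false (φ false c) = φ false c := by
      apply Subtype.ext
      rw [tc_false_coe φ hφcoe, hφcoe]
      rw [hab (m : G) m.2 (c : G) c.2, mul_inv_cancel_right]
    rw [h]
    exact of_apply_eq_base φ false c
  · exact of_apply_eq_base φ true c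

/-- The Dehn twist endomorphism of the pushout. -/
def TwistEnd (hφcoe : ∀ (i : Bool) (c : ↥C), ((φ i c : ↥(cond i G₁ G₂)) : G) = (c : G))
    (hab : ∀ x ∈ C, ∀ y ∈ C, x * y = y * x) (m : ↥C) : PushoutI φ →* PushoutI φ :=
  PushoutI.lift (fun i => (PushoutI.of i).comp (tc φ m i).toMonoidHom) (PushoutI.base φ)
    (tc_comp φ hφcoe hab m)

variable {hφcoe : ∀ (i : Bool) (c : ↥C), ((φ i c : ↥(cond i G₁ G₂)) : G) = (c : G)}
  {hab : ∀ x ∈ C, ∀ y ∈ C, x * y = y * x}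

theorem TwistEnd_of (m : ↥C) (i : Bool) (g : ↥(cond i G₁ G₂)) :
    TwistEnd φ hφcoe hab m (PushoutI.of i g) = PushoutI.of i (tc φ m i g) := by
  unfold TwistEnd
  rw [PushoutI.lift_of]
  rfl

theorem TwistEnd_mul (a b : ↥C) (p : PushoutI φ) :
    TwistEnd φ hφcoe hab a (TwistEnd φ hφcoe hab b p) = TwistEnd φ hφcoe hab (a * b) p := by
  have h : (TwistEnd φ hφcoe hab a).comp (TwistEnd φ hφcoe hab b)
      = TwistEnd φ hφcoe hab (a * b) := by
    apply PushoutI.hom_ext_nonempty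
    intro i
    ext g
    simp only [MonoidHom.comp_apply, TwistEnd_of]
    cases i
    · have htc : tc φ a false (tc φ b false g) = tc φ (a * b) false g := by
        apply Subtype.ext
        rw [tc_false_coe φ hφcoe, tc_false_coe φ hφcoe, tc_false_coe φ hφcoe]
        push_cast
        group
      rw [htc]
    · rfl
  simpa using DFunLike.congr_fun h p

theorem TwistEnd_one (p : PushoutI φ) : TwistEnd φ hφcoe hab 1 p = p := by
  have h : TwistEnd φ hφcoe hab 1 = MonoidHom.id _ := by
    apply PushoutI.hom_ext_nonempty
    intro i
    ext g
    simp only [MonoidHom.comp_apply, TwistEnd_of, MonoidHom.id_apply]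
    cases i
    · have htc : tc φ 1 false g = g := by
        apply Subtype.ext
        rw [tc_false_coe φ hφcoe]
        push_cast
        group
      rw [htc]
    · rfl
  rw [h, MonoidHom.id_apply]


theorem ofCoprodI_wordProd (w : Monoid.CoprodI.Word (fun i => ↥(cond i G₁ G₂))) :
    PushoutI.ofCoprodI (φ := φ) w.prod
      = (w.toList.map fun l => PushoutI.of (φ := φ) l.1 l.2).prod := by
  rw [CoprodI.Word.prod, map_list_prod, List.map_map]
  congr 1

/-- the twisted word -/
def twWord (m : ↥C) (w : Monoid.CoprodI.Word (fun i => ↥(cond i G₁ G₂))) :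
    Monoid.CoprodI.Word (fun i => ↥(cond i G₁ G₂)) where
  toList := w.toList.map fun l => ⟨l.1, tc φ m l.1 l.2⟩
  ne_one := by
    intro l hl
    obtain ⟨l', hl', rfl⟩ := List.mem_map.mp hl
    simp only
    intro h
    exact w.ne_one l' hl' ((EmbeddingLike.map_eq_one_iff (f := tc φ m l'.1)).mp h)
  chain_ne := by
    rw [List.isChain_map]
    exact w.chain_ne

theorem twWord_toList (m : ↥C) (w : Monoid.CoprodI.Word (fun i => ↥(cond i G₁ G₂))) :
    (twWord φ m w).toList = w.toList.map (fun l => ⟨l.1, tc φ m l.1 l.2⟩) := rfl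

theorem twWord_reduced
    (hφcoe : ∀ (i : Bool) (c : ↥C), ((φ i c : ↥(cond i G₁ G₂)) : G) = (c : G)) (m : ↥C)
    {w : Monoid.CoprodI.Word (fun i => ↥(cond i G₁ G₂))} (hw : PushoutI.Reduced φ w) :
    PushoutI.Reduced φ (twWord φ m w) := by
  intro l hl
  rw [twWord_toList] at hl
  obtain ⟨⟨i, x⟩, hl', rfl⟩ := List.mem_map.mp hl
  cases i
  · intro hr
    apply hw ⟨false, x⟩ hl'
    rw [mem_range_iff φ hφcoe] at hr ⊢
    rw [tc_false_coe φ hφcoe] at hr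
    have h6 : (x : G) = (m : G)⁻¹ * ((m : G) * x * (m : G)⁻¹) * (m : G) := by group
    rw [h6]
    exact C.mul_mem (C.mul_mem (C.inv_mem m.2) hr) m.2
  · exact hw ⟨true, x⟩ hl'

theorem TwistEnd_wordProd (m : ↥C) (w : Monoid.CoprodI.Word (fun i => ↥(cond i G₁ G₂))) :
    TwistEnd φ hφcoe hab m (PushoutI.ofCoprodI w.prod)
      = PushoutI.ofCoprodI (φ := φ) (twWord φ m w).prod := by
  rw [ofCoprodI_wordProd, ofCoprodI_wordProd, map_list_prod, twWord_toList, List.map_map,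
    List.map_map]
  congr 1

theorem shape_eq
    (hφcoe' : ∀ (i : Bool) (c : ↥C), ((φ i c : ↥(cond i G₁ G₂)) : G) = (c : G))
    {v w : Monoid.CoprodI.Word (fun i => ↥(cond i G₁ G₂))}
    (hv : PushoutI.Reduced φ v) (hw : PushoutI.Reduced φ w) (h : ↥C)
    (heq : PushoutI.ofCoprodI (φ := φ) v.prod
      = PushoutI.base φ h * PushoutI.ofCoprodI (φ := φ) w.prod) :
    v.toList.map Sigma.fst = w.toList.map Sigma.fst := by
  classical
  obtain ⟨d⟩ := PushoutI.NormalWord.transversal_nonempty φ (φinj φ hφcoe')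
  obtain ⟨V, hV1, hV2⟩ := hv.exists_normalWord_prod_eq d
  obtain ⟨W, hW1, hW2⟩ := hw.exists_normalWord_prod_eq d
  have hVW : V = h • W := by
    apply PushoutI.NormalWord.prod_injective
    rw [hV1, PushoutI.NormalWord.prod_base_smul, hW1]
    exact heq
  rw [← hV2, ← hW2, hVW, PushoutI.NormalWord.base_smul_def']

theorem not_mem_range_of_mem_set {d : Monoid.PushoutI.NormalWord.Transversal φ} {i : Bool}
    {g : ↥(cond i G₁ G₂)} (hg : g ∈ d.set i) (h1 : g ≠ 1) : g ∉ (φ i).range := by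
  intro hr
  refine h1 ?_
  have h2 := (d.compl i).1
    (a₁ := (⟨g, SetLike.mem_coe.mpr hr⟩, ⟨1, d.one_mem i⟩))
    (a₂ := (⟨1, SetLike.mem_coe.mpr (φ i).range.one_mem⟩, ⟨g, hg⟩)) (by simp)
  have h3 := congrArg (fun p => p.2.1) h2
  exact h3.symm

theorem twist_fix (m : ↥C)
    (hstar : ∀ y : G, y ∈ G₂ → y⁻¹ * (m : G) * y ∈ C → y ∈ C)
    (w : Monoid.CoprodI.Word (fun i => ↥(cond i G₁ G₂))) :
    PushoutI.Reduced φ w →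
    TwistEnd φ hφcoe hab m (PushoutI.ofCoprodI w.prod) = PushoutI.ofCoprodI (φ := φ) w.prod →
    ∀ l ∈ w.toList, l.1 = true := by
  induction w using Monoid.CoprodI.Word.consRecOn with
  | empty =>
    intro _ _ l hl
    simp [CoprodI.Word.empty] at hl
  | cons i g w' hIdx hg1 ih =>
    intro hw hfix
    have hw' : PushoutI.Reduced φ w' := fun l hl => hw l (List.mem_cons_of_mem _ hl)
    have hgr : g ∉ (φ i).range := hw ⟨i, g⟩ List.mem_cons_self
    rw [CoprodI.Word.prod_cons, map_mul, PushoutI.ofCoprodI_of, map_mul, TwistEnd_of] at hfix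
    cases i
    · -- i = false : contradiction
      exfalso
      have h2 : TwistEnd φ hφcoe hab m (PushoutI.ofCoprodI w'.prod)
          = PushoutI.of (φ := φ) false ((tc φ m false g)⁻¹ * g)
            * PushoutI.ofCoprodI (φ := φ) w'.prod := by
        rw [map_mul, map_inv, mul_assoc, ← hfix, inv_mul_cancel_left]
      by_cases hu : (tc φ m false g)⁻¹ * g ∈ (φ false).range
      · rw [mem_range_iff φ hφcoe] at hu
        apply hgr
        rw [mem_range_iff φ hφcoe]
        apply hstar (g : G) g.2
        have hcoe : (((tc φ m false g)⁻¹ * g : ↥(cond false G₁ G₂)) : G)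
            = ((m : G) * g * (m : G)⁻¹)⁻¹ * g := by
          push_cast
          rw [tc_false_coe φ hφcoe]
        have h7 : (g : G)⁻¹ * (m : G) * (g : G)
            = (((tc φ m false g)⁻¹ * g : ↥(cond false G₁ G₂)) : G)⁻¹ * (m : G) := by
          rw [hcoe]; group
        rw [h7]
        exact C.mul_mem (C.inv_mem hu) m.2
      · have hu1 : (tc φ m false g)⁻¹ * g ≠ 1 := fun h => hu (h ▸ (φ false).range.one_mem)
        have hv : PushoutI.Reduced φ
            (Monoid.CoprodI.Word.cons ((tc φ m false g)⁻¹ * g) w' hIdx hu1) := by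
          intro l hl
          rcases List.mem_cons.mp hl with h | h
          · rw [h]
            exact hu
          · exact hw' l h
        have hsh := shape_eq φ hφcoe (twWord_reduced φ hφcoe m hw') hv 1 (by
          rw [map_one, one_mul, CoprodI.Word.prod_cons, map_mul, PushoutI.ofCoprodI_of,
            ← TwistEnd_wordProd (hφcoe := hφcoe) (hab := hab), h2])
        have hlen := congrArg List.length hsh
        simp [twWord_toList, CoprodI.Word.cons] at hlen
    · -- i = true
      have htc : tc φ m true g = g := rfl
      rw [htc] at hfix
      have h2 := mul_left_cancel hfix
      intro l hl
      rcases List.mem_cons.mp hl with h | h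
      · rw [h]
      · exact ih hw' h2 l h

theorem fix_range (m : ↥C)
    (hstar : ∀ y : G, y ∈ G₂ → y⁻¹ * (m : G) * y ∈ C → y ∈ C)
    {p : PushoutI φ} (hfix : TwistEnd φ hφcoe hab m p = p) :
    p ∈ (PushoutI.of (φ := φ) true).range := by
  classical
  obtain ⟨d⟩ := PushoutI.NormalWord.transversal_nonempty φ (φinj φ hφcoe)
  have hWp : (p • (PushoutI.NormalWord.empty : Monoid.PushoutI.NormalWord d)).prod = p := by
    rw [PushoutI.NormalWord.prod_smul, PushoutI.NormalWord.prod_empty, mul_one]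
  generalize hWdef : (p • (PushoutI.NormalWord.empty : Monoid.PushoutI.NormalWord d)) = W at hWp
  have hpq : p = PushoutI.base φ W.head * PushoutI.ofCoprodI (φ := φ) W.toWord.prod := by
    rw [← hWp]; rfl
  have hWred : PushoutI.Reduced φ W.toWord := by
    rintro ⟨i, y⟩ hl
    exact not_mem_range_of_mem_set φ (W.normalized i y hl) (W.toWord.ne_one ⟨i, y⟩ hl)
  have hTbase : TwistEnd φ hφcoe hab m (PushoutI.base φ W.head) = PushoutI.base φ W.head := by
    rw [← PushoutI.of_apply_eq_base φ true, TwistEnd_of]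
    rfl
  have hq : TwistEnd φ hφcoe hab m (PushoutI.ofCoprodI (φ := φ) W.toWord.prod)
      = PushoutI.ofCoprodI (φ := φ) W.toWord.prod := by
    have h5 := hfix
    rw [hpq, map_mul, hTbase] at h5
    exact mul_left_cancel h5
  have hall := twist_fix φ m hstar W.toWord hWred hq
  have hqmem : PushoutI.ofCoprodI (φ := φ) W.toWord.prod
      ∈ (PushoutI.of (φ := φ) true).range := by
    rw [ofCoprodI_wordProd]
    refine Subgroup.list_prod_mem _ ?_
    intro x hx
    obtain ⟨⟨i, y⟩, hl, rfl⟩ := List.mem_map.mp hx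
    have hi : i = true := hall ⟨i, y⟩ hl
    subst hi
    exact ⟨y, rfl⟩
  rw [hpq]
  exact Subgroup.mul_mem _ ⟨φ true W.head, PushoutI.of_apply_eq_base φ true W.head⟩ hqmem


theorem racl_main
    (hTF : ∀ g : G, g ≠ 1 → ¬IsOfFinOrder g) (hCSA : IsCSA G) (h₂ : C ≤ G₂)
    (hab' : ∀ x ∈ C, ∀ y ∈ C, x * y = y * x) (hmax₂ : IsMaxAbelianIn C G₂)
    (hφcoe' : ∀ (i : Bool) (c : ↥C), ((φ i c : ↥(cond i G₁ G₂)) : G) = (c : G))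
    (ℓ : Monoid.PushoutI φ →* G)
    (hof : ∀ i, ℓ.comp (Monoid.PushoutI.of i) = (cond i G₁ G₂).subtype)
    (hinj : Function.Injective ℓ) (hsurj : Function.Surjective ℓ)
    (m0 : G) (hm0C : m0 ∈ C) (hm0 : m0 ≠ 1)
    (A : Subgroup G) (hA : A ≤ G₁)
    {g : G} (hg : {x : G | ∃ f : G ≃* G, (∀ a ∈ (A : Set G), f a = a) ∧ f g = x}.Finite) :
    g ∈ G₁ := by
  classical
  let e : Monoid.PushoutI φ ≃* G := MulEquiv.ofBijective ℓ ⟨hinj, hsurj⟩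
  set m : ↥C := ⟨m0, hm0C⟩ with hm
  have hTbij : ∀ m' : ↥C, Function.Bijective (TwistEnd φ hφcoe' hab' m') := by
    intro m'
    constructor
    · intro a b h
      have h2 := congrArg (TwistEnd φ hφcoe' hab' m'⁻¹) h
      rwa [TwistEnd_mul, TwistEnd_mul, inv_mul_cancel, TwistEnd_one, TwistEnd_one] at h2
    · intro a
      exact ⟨TwistEnd φ hφcoe' hab' m'⁻¹ a,
        by rw [TwistEnd_mul, mul_inv_cancel, TwistEnd_one]⟩
  let ψ : ↥C → (G ≃* G) := fun m' =>
    (e.symm.trans (MulEquiv.ofBijective _ (hTbij m'))).trans e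
  have hψapp : ∀ (m' : ↥C) (x : G), ψ m' x = e (TwistEnd φ hφcoe' hab' m' (e.symm x)) :=
    fun _ _ => rfl
  have hofapply : ∀ (i : Bool) (x : ↥(cond i G₁ G₂)),
      e (Monoid.PushoutI.of (φ := φ) i x) = (x : G) := by
    intro i x
    have h3 := DFunLike.congr_fun (hof i) x
    exact h3
  have hfixG₁ : ∀ (m' : ↥C) (x : G), x ∈ G₁ → ψ m' x = x := by
    intro m' x hx
    have h1 : e (Monoid.PushoutI.of (φ := φ) true ⟨x, hx⟩) = x := hofapply true ⟨x, hx⟩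
    have h2 : e.symm x = Monoid.PushoutI.of (φ := φ) true ⟨x, hx⟩ := by
      apply e.injective
      rw [MulEquiv.apply_symm_apply]
      exact h1.symm
    rw [hψapp, h2, TwistEnd_of]
    exact h1
  have hmaps : Set.MapsTo (fun k : ℤ => ψ (m ^ k) g) Set.univ
      {x : G | ∃ f : G ≃* G, (∀ a ∈ (A : Set G), f a = a) ∧ f g = x} :=
    fun k _ => ⟨ψ (m ^ k), fun a ha => hfixG₁ _ a (hA ha), rfl⟩
  obtain ⟨k, -, l, -, hkl, heq⟩ :=
    Set.infinite_univ.exists_ne_map_eq_of_mapsTo hmaps hg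
  have hT : TwistEnd φ hφcoe' hab' (m ^ k) (e.symm g)
      = TwistEnd φ hφcoe' hab' (m ^ l) (e.symm g) := by
    apply e.injective
    rw [← hψapp, ← hψapp]
    exact heq
  have hzp : m ^ (-l) * m ^ k = m ^ (-l + k) := (zpow_add m (-l) k).symm
  have hfix2 : TwistEnd φ hφcoe' hab' (m ^ (-l + k)) (e.symm g) = e.symm g := by
    calc TwistEnd φ hφcoe' hab' (m ^ (-l + k)) (e.symm g)
        = TwistEnd φ hφcoe' hab' (m ^ (-l))
            (TwistEnd φ hφcoe' hab' (m ^ k) (e.symm g)) := by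
          rw [TwistEnd_mul, hzp]
      _ = TwistEnd φ hφcoe' hab' (m ^ (-l))
            (TwistEnd φ hφcoe' hab' (m ^ l) (e.symm g)) := by rw [hT]
      _ = TwistEnd φ hφcoe' hab' (m ^ (-l) * m ^ l) (e.symm g) := TwistEnd_mul φ _ _ _
      _ = e.symm g := by
          rw [← zpow_add, neg_add_cancel, zpow_zero, TwistEnd_one]
  have hne : (-l + k) ≠ 0 := by omega
  have hmn : ((m ^ (-l + k) : ↥C) : G) ≠ 1 := by
    intro h
    apply hTF m0 hm0
    refine isOfFinOrder_iff_zpow_eq_one.mpr ⟨-l + k, hne, ?_⟩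
    have h4 : ((m ^ (-l + k) : ↥C) : G) = m0 ^ (-l + k) := by
      rw [SubgroupClass.coe_zpow]
    rw [← h4]
    exact h
  have hstar2 : ∀ y : G, y ∈ G₂ → y⁻¹ * ((m ^ (-l + k) : ↥C) : G) * y ∈ C → y ∈ C :=
    fun y hy hc => star_lemma hCSA h₂ hab' hmax₂ _ (m ^ (-l + k)).2 hmn y hy hc
  obtain ⟨x, hx⟩ := fix_range φ (m ^ (-l + k)) hstar2 hfix2
  have h5 : g = (x : G) := by
    calc g = e (e.symm g) := (e.apply_symm_apply g).symm
      _ = e (Monoid.PushoutI.of (φ := φ) true x) := by rw [hx]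
      _ = (x : G) := hofapply true x
  exact h5 ▸ x.2

end RaclAux

end AmalgamAux

/-- Let `G` be a torsion-free CSA group, `G = G₁ ∗_C G₂` an
amalgamated free product over an abelian subgroup `C = G₁ ⊓ G₂` which is maximal abelian
both in `G₁` and in `G₂`, and let `A ≤ G₁` be a subgroup. Then `racl_G(A) ⊆ G₁`; in
particular `acl(A) ⊆ G₁`. -/
theorem racl_le_of_amalgam {G : Type*} [Group G]
    (hTF : ∀ g : G, g ≠ 1 → ¬IsOfFinOrder g) (hCSA : IsCSA G)
    (G₁ G₂ C : Subgroup G) (hC : C = G₁ ⊓ G₂) (h₁ : C ≤ G₁) (h₂ : C ≤ G₂)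
    (hab : ∀ x ∈ C, ∀ y ∈ C, x * y = y * x)
    (hmax₁ : IsMaxAbelianIn C G₁) (hmax₂ : IsMaxAbelianIn C G₂)
    (hamal : IsAmalgamOf G₁ G₂ C h₁ h₂ ⊤)
    (A : Subgroup G) (hA : A ≤ G₁) :
    racl (A : Set G) ⊆ (G₁ : Set G) ∧ acl (A : Set G) ⊆ (G₁ : Set G) := by
  have hracl : racl (A : Set G) ⊆ (G₁ : Set G) := by
    intro g hg
    obtain ⟨ℓ, hof, hinj, hrange⟩ := hamal
    have hsurj : Function.Surjective ℓ := MonoidHom.range_eq_top.mp hrange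
    by_cases hCtriv : ∀ x ∈ C, x = (1 : G)
    · have hzp : ∀ (H : Subgroup G), IsMaxAbelianIn C H → ∀ x ∈ H, x = (1 : G) := by
        intro H hmax x hx
        have habz : ∀ a ∈ Subgroup.zpowers x, ∀ b ∈ Subgroup.zpowers x, a * b = b * a := by
          intro a ha b hb
          obtain ⟨j, rfl⟩ := Subgroup.mem_zpowers_iff.mp ha
          obtain ⟨k, rfl⟩ := Subgroup.mem_zpowers_iff.mp hb
          exact zpow_mul_comm x j k
        have hCz := hmax.2.2 (Subgroup.zpowers x) (Subgroup.zpowers_le.mpr hx) habz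
          (fun c hc => by rw [hCtriv c hc]; exact Subgroup.one_mem _)
        exact hCtriv x (hCz ▸ Subgroup.mem_zpowers x)
      have hl1 : ℓ = 1 := by
        apply Monoid.PushoutI.hom_ext_nonempty
        intro i
        rw [hof i]
        ext x
        simp only [MonoidHom.one_apply, MonoidHom.comp_apply, Subgroup.coe_subtype]
        cases i
        · exact hzp G₂ hmax₂ x x.2
        · exact hzp G₁ hmax₁ x x.2
      obtain ⟨q, rfl⟩ := hsurj g
      rw [hl1]
      simpa using G₁.one_mem
    · push_neg at hCtriv
      obtain ⟨m0, hm0C, hm0⟩ := hCtriv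
      exact RaclAux.racl_main _ hTF hCSA h₂ hab hmax₂ (fun i c => rfl) ℓ hof hinj hsurj
        m0 hm0C hm0 A hA hg
  exact ⟨hracl, fun b hb => hracl (acl_subset_racl (A : Set G) hb)⟩
end

section
/- Let G be an equationally noetherian group, let G* be an elementary extension of G (in the language of groups), let P be a subset of G, and let K be a finitely generated subgroup of G* with P ⊆ K. Then there exists a finite subset P₀ ⊆ P such that every group homomorphism f : K → G* fixing P₀ pointwise fixes P pointwise. -/
open FirstOrder Filter

namespace StmtAux

open FirstOrder.Language

variable {β : Type*}

def tmul (t₁ t₂ : grpLang.Term β) : grpLang.Term β := Term.func GrpFunc.mul ![t₁, t₂]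
def tinv (t : grpLang.Term β) : grpLang.Term β := Term.func GrpFunc.inv ![t]
def tone : grpLang.Term β := Term.func GrpFunc.one ![]

def wTerm (l : List (β × Bool)) : grpLang.Term β :=
  l.foldr (fun x t => tmul (cond x.2 (Term.var x.1) (tinv (Term.var x.1))) t) tone

lemma realize_tmul {M : Type*} [Group M] (v : β → M) (t₁ t₂ : grpLang.Term β) :
    (tmul t₁ t₂).realize v = t₁.realize v * t₂.realize v := rfl

lemma realize_tinv {M : Type*} [Group M] (v : β → M) (t : grpLang.Term β) :
    (tinv t).realize v = (t.realize v)⁻¹ := rfl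

lemma realize_tone {M : Type*} [Group M] (v : β → M) :
    (tone : grpLang.Term β).realize v = 1 := rfl

lemma realize_wTerm {M : Type*} [Group M] (v : β → M) (l : List (β × Bool)) :
    (wTerm l).realize v = (l.map fun x => cond x.2 (v x.1) (v x.1)⁻¹).prod := by
  induction l with
  | nil => simp [wTerm, realize_tone]
  | cons a t ih =>
    simp only [wTerm, List.foldr_cons, List.map_cons, List.prod_cons] at *
    rw [realize_tmul, ih]
    cases a.2 <;> simp [realize_tinv]

def wordTerm {N : ℕ} {α : Type*} (w : FreeGroup (Fin N)) : grpLang.Term (α ⊕ Fin N) :=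
  wTerm (w.toWord.map fun x => (Sum.inr x.1, x.2))

lemma realize_wordTerm {M : Type*} [Group M] {N : ℕ} {α : Type*} (w : FreeGroup (Fin N))
    (v : α → M) (xs : Fin N → M) :
    (wordTerm (α := α) w).realize (Sum.elim v xs) = FreeGroup.lift xs w := by
  rw [wordTerm, realize_wTerm, List.map_map]
  conv_rhs => rw [← FreeGroup.mk_toWord (x := w), FreeGroup.lift_mk]
  congr 1

def chainImp {L : FirstOrder.Language} {α : Type*} {n : ℕ}
    (l : List (L.BoundedFormula α n)) (c : L.BoundedFormula α n) : L.BoundedFormula α n :=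
  l.foldr (· ⟹ ·) c

lemma realize_chainImp {L : FirstOrder.Language} {α : Type*} {n : ℕ} {M : Type*}
    [L.Structure M] (l : List (L.BoundedFormula α n)) (c : L.BoundedFormula α n)
    (v : α → M) (xs : Fin n → M) :
    (chainImp l c).Realize v xs ↔ ((∀ φ ∈ l, φ.Realize v xs) → c.Realize v xs) := by
  induction l with
  | nil => simp [chainImp]
  | cons h t ih =>
    simp only [chainImp, List.foldr_cons, BoundedFormula.realize_imp, List.forall_mem_cons] at *
    rw [ih]; tauto

def wordsFormula {N m : ℕ} (ws : Fin (m + 1) → FreeGroup (Fin N)) :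
    grpLang.Formula (Fin (m + 1)) :=
  (chainImp
    ((List.finRange m).map fun i =>
      Term.bdEqual (wordTerm (ws i.castSucc)) (Term.var (Sum.inl i.castSucc)))
    (Term.bdEqual (wordTerm (ws (Fin.last m))) (Term.var (Sum.inl (Fin.last m))))).alls

lemma realize_wordsFormula {M : Type*} [Group M] {N m : ℕ}
    (ws : Fin (m + 1) → FreeGroup (Fin N)) (v : Fin (m + 1) → M) :
    (wordsFormula ws).Realize v ↔
      ∀ xs : Fin N → M,
        (∀ i : Fin m, FreeGroup.lift xs (ws i.castSucc) = v i.castSucc) →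
        FreeGroup.lift xs (ws (Fin.last m)) = v (Fin.last m) := by
  rw [wordsFormula, BoundedFormula.realize_alls]
  refine forall_congr' fun xs => ?_
  rw [realize_chainImp]
  simp only [List.mem_map, List.mem_finRange, BoundedFormula.realize_bdEqual,
    realize_wordTerm, Term.realize_var, Sum.elim_inl]
  constructor
  · intro h hyp
    exact h fun φ hφ => by obtain ⟨i, -, rfl⟩ := hφ; simp [realize_wordTerm, hyp i]
  · intro h hyp
    refine h fun i => ?_
    have := hyp _ ⟨i, trivial, rfl⟩
    simpa [realize_wordTerm] using this

end StmtAux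

/-- Let `G` be an equationally noetherian group, `G*` an elementary
extension of `G`, `P` a subset of `G` and `K` a finitely generated subgroup of `G*`
with `P ⊆ K`. Then there is a finite subset `P₀ ⊆ P` such that every homomorphism
`f : K → G*` fixing `P₀` pointwise fixes `P` pointwise. (Here `G` is realized as a
subgroup of `G*` whose inclusion is elementary.) -/

theorem finite_subset_determines_fixing {Gs : Type*} [Group Gs] (G : Subgroup Gs)
    (hel : ElementarySub G) (hEN : EqNoetherian ↥G)
    (P : Set Gs) (hPG : P ⊆ (G : Set Gs))
    (K : Subgroup Gs) (hK : K.FG) (hPK : P ⊆ (K : Set Gs)) :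
    ∃ (P₀ : Set Gs) (hsub : P₀ ⊆ P), P₀.Finite ∧
      ∀ f : ↥K →* Gs,
        (∀ p (hp : p ∈ P₀), f ⟨p, hPK (hsub hp)⟩ = p) →
        ∀ p (hp : p ∈ P), f ⟨p, hPK hp⟩ = p := by
  classical
  obtain ⟨Tset, hTcl, hTfin⟩ := (Subgroup.fg_iff K).mp hK
  obtain ⟨n, kf, -, hkfrange⟩ := hTfin.fin_param
  set N := n + 1 with hN
  set k' : Fin N → Gs := Fin.cons 1 kf with hk'
  have hclk' : Subgroup.closure (Set.range k') = K := by
    rw [hk', Fin.range_cons, ← Set.singleton_union, Subgroup.closure_union,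
      Subgroup.closure_singleton_one, bot_sup_eq, hkfrange, hTcl]
  have hkK : ∀ i, k' i ∈ K := fun i => by
    rw [← hclk']; exact Subgroup.subset_closure ⟨i, rfl⟩
  have hword : ∀ p : ↥P, ∃ w : FreeGroup (Fin N), FreeGroup.lift k' w = ↑p := by
    intro p
    have : (p : Gs) ∈ (FreeGroup.lift k').range := by
      rw [FreeGroup.range_lift_eq_closure, hclk']; exact hPK p.2
    exact this
  choose wd hwd using hword
  set s : ↥P → Monoid.Coprod ↥G (FreeGroup (Fin N)) :=
    fun p => Monoid.Coprod.inr (wd p) * (Monoid.Coprod.inl (⟨↑p, hPG p.2⟩ : ↥G))⁻¹ with hs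
  obtain ⟨S₀, hS₀S, hS₀fin, hENkey⟩ := hEN N n.succ_pos (Set.range s)
  have hτ : ∀ t : ↥S₀, ∃ p : ↥P, s p = ↑t := fun t => hS₀S t.2
  choose g hg using hτ
  haveI := hS₀fin.to_subtype
  obtain ⟨m, q, -, hq⟩ := (Set.finite_range g).fin_param
  have hS₀char : ∀ t, t ∈ S₀ ↔ ∃ i : Fin m, s (q i) = t := by
    intro t
    constructor
    · intro ht
      have hmem : g ⟨t, ht⟩ ∈ Set.range q := by rw [hq]; exact ⟨⟨t, ht⟩, rfl⟩
      obtain ⟨i, hi⟩ := hmem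
      exact ⟨i, by rw [hi, hg]⟩
    · rintro ⟨i, rfl⟩
      have hmem : q i ∈ Set.range g := by rw [← hq]; exact ⟨i, rfl⟩
      obtain ⟨t', ht'⟩ := hmem
      rw [← ht', hg]
      exact t'.2
  refine ⟨(fun p : ↥P => (p : Gs)) '' (Set.range q),
    fun x hx => by obtain ⟨p', -, rfl⟩ := hx; exact p'.2,
    (Set.finite_range q).image _, ?_⟩
  intro f hf p hp
  set pP : ↥P := ⟨p, hp⟩ with hpP
  set ws : Fin (m + 1) → FreeGroup (Fin N) := Fin.snoc (fun i => wd (q i)) (wd pP) with hws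
  set vG : Fin (m + 1) → ↥G :=
    Fin.snoc (fun i => (⟨↑(q i), hPG (q i).2⟩ : ↥G)) (⟨p, hPG hp⟩ : ↥G) with hvG
  have hGreal : (StmtAux.wordsFormula ws).Realize vG := by
    rw [StmtAux.realize_wordsFormula]
    intro xs hyp
    set F : Monoid.Coprod ↥G (FreeGroup (Fin N)) →* ↥G :=
      Monoid.Coprod.lift (MonoidHom.id ↥G) (FreeGroup.lift xs) with hF
    have hFs : ∀ p' : ↥P,
        F (s p') = FreeGroup.lift xs (wd p') * (⟨↑p', hPG p'.2⟩ : ↥G)⁻¹ := by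
      intro p'
      rw [hs]
      simp only [map_mul, map_inv, hF, Monoid.Coprod.lift_apply_inl,
        Monoid.Coprod.lift_apply_inr, MonoidHom.id_apply]
    have h0 : ∀ t ∈ S₀, F t = 1 := by
      intro t ht
      obtain ⟨i, rfl⟩ := (hS₀char t).mp ht
      rw [hFs, mul_inv_eq_one]
      have h1 := hyp i
      rwa [hws, hvG, Fin.snoc_castSucc, Fin.snoc_castSucc] at h1
    have hall := (hENkey F (Monoid.Coprod.lift_comp_inl _ _)).mp h0 (s pP) ⟨pP, rfl⟩
    rw [hFs, mul_inv_eq_one] at hall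
    rw [hws, hvG, Fin.snoc_last, Fin.snoc_last]
    exact hall
  have hGs := (hel (m + 1) (StmtAux.wordsFormula ws) vG).mpr hGreal
  rw [StmtAux.realize_wordsFormula] at hGs
  set kK : Fin N → ↥K := fun i => (⟨k' i, hkK i⟩ : ↥K) with hkKdef
  set xs : Fin N → Gs := fun i => f (kK i) with hxs
  have hsub1 : K.subtype.comp (FreeGroup.lift kK) = FreeGroup.lift k' :=
    FreeGroup.ext_hom _ _ fun i => by simp [hkKdef]
  have hsub2 : f.comp (FreeGroup.lift kK) = FreeGroup.lift xs :=
    FreeGroup.ext_hom _ _ fun i => by simp [hxs]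
  have hbridge : ∀ p' : ↥P, FreeGroup.lift xs (wd p') = f ⟨↑p', hPK p'.2⟩ := by
    intro p'
    have h1 : FreeGroup.lift kK (wd p') = (⟨↑p', hPK p'.2⟩ : ↥K) := by
      apply Subtype.ext
      have : K.subtype (FreeGroup.lift kK (wd p')) = FreeGroup.lift k' (wd p') := by
        rw [← hsub1]; rfl
      rw [hwd] at this
      exact this
    rw [← hsub2, MonoidHom.comp_apply, h1]
  have hyps : ∀ i : Fin m, FreeGroup.lift xs (ws i.castSucc) = ((vG i.castSucc : ↥G) : Gs) := by
    intro i
    rw [hws, hvG, Fin.snoc_castSucc, Fin.snoc_castSucc, hbridge (q i)]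
    exact hf (↑(q i)) ⟨q i, ⟨i, rfl⟩, rfl⟩
  have hfinal := hGs xs hyps
  rw [hws, hvG, Fin.snoc_last, Fin.snoc_last, hbridge pP] at hfinal
  exact hfinal
end

section
/- Let G be a finitely generated equationally noetherian group and A a subgroup of G. Let K be a finitely generated subgroup of G such that acl^∃(A) is a proper subgroup of K. Then there exists a stable sequence of pairwise distinct group homomorphisms (hₙ : K → G) with trivial stable kernel which bounds acl^∃(A) in the limit. -/
open FirstOrder Filter

namespace Stmt15
open FirstOrder Language BoundedFormula

variable {G : Type*} [Group G]

def tOne {V : Type*} : grpLang.Term V := Term.func GrpFunc.one ![]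
def tMul {V : Type*} (t₁ t₂ : grpLang.Term V) : grpLang.Term V := Term.func GrpFunc.mul ![t₁, t₂]
def tInv {V : Type*} (t : grpLang.Term V) : grpLang.Term V := Term.func GrpFunc.inv ![t]

@[simp] lemma realize_tOne {V : Type*} (v : V → G) : (tOne (V := V)).realize v = 1 := rfl

@[simp] lemma realize_tMul {V : Type*} (v : V → G) (t₁ t₂ : grpLang.Term V) :
    (tMul t₁ t₂).realize v = t₁.realize v * t₂.realize v := rfl

@[simp] lemma realize_tInv {V : Type*} (v : V → G) (t : grpLang.Term V) :
    (tInv t).realize v = (t.realize v)⁻¹ := rfl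

def wordTerm {m : ℕ} {V : Type*} (g : Fin m → grpLang.Term V) :
    List (Fin m × Bool) → grpLang.Term V
  | [] => tOne
  | p :: l => tMul (cond p.2 (g p.1) (tInv (g p.1))) (wordTerm g l)

lemma realize_wordTerm {m : ℕ} {V : Type*} (g : Fin m → grpLang.Term V) (v : V → G) :
    ∀ l : List (Fin m × Bool), (wordTerm g l).realize v
      = FreeGroup.lift (fun i => (g i).realize v) (FreeGroup.mk l) := by
  intro l
  induction l with
  | nil => simp [wordTerm, ← FreeGroup.one_eq_mk]
  | cons p l ih =>
      have : FreeGroup.mk (p :: l) = FreeGroup.mk [p] * FreeGroup.mk l := by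
        rw [FreeGroup.mul_mk]; rfl
      rw [this, map_mul]
      cases hp : p.2 <;> simp [wordTerm, ih, hp, FreeGroup.lift_mk]

lemma realize_wordTerm' {m : ℕ} {V : Type*} (g : Fin m → grpLang.Term V) (v : V → G)
    (w : FreeGroup (Fin m)) :
    (wordTerm g w.toWord).realize v = FreeGroup.lift (fun i => (g i).realize v) w := by
  rw [realize_wordTerm, FreeGroup.mk_toWord]

lemma qf_relabel {α β : Type*} {k K : ℕ} (f : α ⊕ Fin k → β ⊕ Fin K)
    {ψ : grpLang.BoundedFormula α k} (hψ : ψ.IsQF) :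
    ∃ ψ' : grpLang.BoundedFormula β K, ψ'.IsQF ∧ ∀ (v : β → G) (xs : Fin K → G),
      ψ'.Realize v xs ↔ ψ.Realize (fun a => Sum.elim v xs (f (Sum.inl a)))
        (fun i => Sum.elim v xs (f (Sum.inr i))) := by
  induction hψ with
  | falsum => exact ⟨⊥, isQF_bot, fun v xs => Iff.rfl⟩
  | of_isAtomic h =>
      cases h with
      | equal t₁ t₂ =>
          refine ⟨(t₁.relabel f).bdEqual (t₂.relabel f), (IsAtomic.equal _ _).isQF, ?_⟩
          intro v xs
          have hval : (Sum.elim (fun a => Sum.elim v xs (f (Sum.inl a)))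
              (fun i => Sum.elim v xs (f (Sum.inr i))) : α ⊕ Fin k → G)
              = Sum.elim v xs ∘ f := by
            funext x; cases x <;> rfl
          rw [realize_bdEqual, realize_bdEqual, hval, Term.realize_relabel, Term.realize_relabel]
      | rel R ts => exact Empty.elim R
  | imp h₁ h₂ ih₁ ih₂ =>
      obtain ⟨ψ₁', q₁, r₁⟩ := ih₁
      obtain ⟨ψ₂', q₂, r₂⟩ := ih₂
      exact ⟨ψ₁'.imp ψ₂', q₁.imp q₂, fun v xs => by rw [realize_imp, realize_imp, r₁, r₂]⟩

/-- Existentially definable (over parameters `Aset`) relations in `1 + m` variables. -/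
def ExRel (Aset : Set G) (m : ℕ) (P : G → (Fin m → G) → Prop) : Prop :=
  ∃ (N : ℕ) (ψ : grpLang.BoundedFormula (↥Aset ⊕ Fin 1) (m + N)), ψ.IsQF ∧
    ∀ (x : G) (y : Fin m → G), P x y ↔ ∃ z : Fin N → G,
      ψ.Realize (Sum.elim Subtype.val fun _ => x) (Fin.append y z)

variable {Aset : Set G} {m : ℕ}

lemma ExRel.of_iff {P Q : G → (Fin m → G) → Prop} (h : ExRel Aset m P)
    (hiff : ∀ x y, Q x y ↔ P x y) : ExRel Aset m Q := by
  obtain ⟨N, ψ, qf, hr⟩ := h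
  exact ⟨N, ψ, qf, fun x y => (hiff x y).trans (hr x y)⟩

lemma ExRel.true : ExRel Aset m fun (_ : G) _ => True := by
  refine ⟨0, ⊤, IsQF.top, fun x y => ?_⟩
  simp only [realize_top, true_iff]
  exact ⟨fun i => i.elim0, trivial⟩

lemma ExRel.eq_one (w : FreeGroup (Fin m)) :
    ExRel Aset m fun (_ : G) y => FreeGroup.lift y w = 1 := by
  refine ⟨0, (wordTerm (fun i => Term.var (Sum.inr (Fin.castAdd 0 i))) w.toWord).bdEqual tOne,
    (IsAtomic.equal _ _).isQF, fun x y => ?_⟩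
  simp only [realize_bdEqual, realize_wordTerm', Term.realize_var, Sum.elim_inr,
    Fin.append_left, realize_tOne]
  exact ⟨fun h => ⟨fun i => i.elim0, h⟩, fun ⟨z, h⟩ => h⟩

lemma ExRel.ne_one (w : FreeGroup (Fin m)) :
    ExRel Aset m fun (_ : G) y => FreeGroup.lift y w ≠ 1 := by
  refine ⟨0, ((wordTerm (fun i => Term.var (Sum.inr (Fin.castAdd 0 i))) w.toWord).bdEqual
    tOne).not, ((IsAtomic.equal _ _).isQF).not, fun x y => ?_⟩
  simp only [realize_not, realize_bdEqual, realize_wordTerm', Term.realize_var, Sum.elim_inr,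
    Fin.append_left, realize_tOne]
  exact ⟨fun h => ⟨fun i => i.elim0, h⟩, fun ⟨z, h⟩ => h⟩

lemma ExRel.x_eq (w : FreeGroup (Fin m)) :
    ExRel Aset m fun (x : G) y => x = FreeGroup.lift y w := by
  refine ⟨0, (Term.var (Sum.inl (Sum.inr 0))).bdEqual
    (wordTerm (fun i => Term.var (Sum.inr (Fin.castAdd 0 i))) w.toWord),
    (IsAtomic.equal _ _).isQF, fun x y => ?_⟩
  simp only [realize_bdEqual, realize_wordTerm', Term.realize_var, Sum.elim_inl, Sum.elim_inr,
    Fin.append_left]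
  exact ⟨fun h => ⟨fun i => i.elim0, h⟩, fun ⟨z, h⟩ => h⟩

lemma ExRel.inf {P Q : G → (Fin m → G) → Prop} (h₁ : ExRel Aset m P) (h₂ : ExRel Aset m Q) :
    ExRel Aset m fun x y => P x y ∧ Q x y := by
  obtain ⟨N₁, ψ₁, q₁, r₁⟩ := h₁
  obtain ⟨N₂, ψ₂, q₂, r₂⟩ := h₂
  set g₁ : Fin (m + N₁) → Fin (m + (N₁ + N₂)) :=
    Fin.addCases (fun i => Fin.castAdd (N₁ + N₂) i)
      (fun i => Fin.natAdd m (Fin.castAdd N₂ i)) with hg₁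
  set g₂ : Fin (m + N₂) → Fin (m + (N₁ + N₂)) :=
    Fin.addCases (fun i => Fin.castAdd (N₁ + N₂) i)
      (fun i => Fin.natAdd m (Fin.natAdd N₁ i)) with hg₂
  obtain ⟨ψ₁', q₁', r₁'⟩ := qf_relabel (G := G) (Sum.map id g₁) q₁
  obtain ⟨ψ₂', q₂', r₂'⟩ := qf_relabel (G := G) (Sum.map id g₂) q₂
  refine ⟨N₁ + N₂, ψ₁' ⊓ ψ₂', q₁'.inf q₂', fun x y => ?_⟩
  set v : ↥Aset ⊕ Fin 1 → G := Sum.elim Subtype.val fun _ => x with hv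
  have key₁ : ∀ z : Fin (N₁ + N₂) → G,
      (fun i => Sum.elim v (Fin.append y z) (Sum.map id g₁ (Sum.inr i)))
        = Fin.append y (fun j => z (Fin.castAdd N₂ j)) := by
    intro z; funext i
    induction i using Fin.addCases with
    | left j => simp [hg₁, Fin.append_left]
    | right j => simp [hg₁, Fin.append_right]
  have key₂ : ∀ z : Fin (N₁ + N₂) → G,
      (fun i => Sum.elim v (Fin.append y z) (Sum.map id g₂ (Sum.inr i)))
        = Fin.append y (fun j => z (Fin.natAdd N₁ j)) := by
    intro z; funext i
    induction i using Fin.addCases with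
    | left j => simp [hg₂, Fin.append_left]
    | right j => simp [hg₂, Fin.append_right]
  constructor
  · rintro ⟨hP, hQ⟩
    obtain ⟨z₁, hz₁⟩ := (r₁ x y).mp hP
    obtain ⟨z₂, hz₂⟩ := (r₂ x y).mp hQ
    refine ⟨Fin.append z₁ z₂, ?_⟩
    rw [realize_inf, r₁', r₂', key₁, key₂]
    constructor
    · convert hz₁ using 2
      · rfl
      funext j; simp [Fin.append_left]
    · convert hz₂ using 2
      · rfl
      funext j; simp [Fin.append_right]
  · rintro ⟨z, hz⟩
    rw [realize_inf, r₁', r₂', key₁, key₂] at hz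
    exact ⟨(r₁ x y).mpr ⟨_, hz.1⟩, (r₂ x y).mpr ⟨_, hz.2⟩⟩

lemma ExRel.forall_list {ι : Type*} (l : List ι) (C : ι → G → (Fin m → G) → Prop)
    (h : ∀ i, ExRel Aset m (C i)) :
    ExRel Aset m fun x y => ∀ i ∈ l, C i x y := by
  induction l with
  | nil => exact ExRel.true.of_iff (by simp)
  | cons a l ih => exact ((h a).inf ih).of_iff (by simp)

lemma ExRel.exists_formula {P : G → (Fin m → G) → Prop} (h : ExRel Aset m P) :
    ∃ φ : grpLang.Formula (↥Aset ⊕ Fin 1), _root_.IsExistential φ ∧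
      ∀ x : G, φ.Realize (Sum.elim Subtype.val fun _ => x) ↔ ∃ y, P x y := by
  obtain ⟨N, ψ, qf, hiff⟩ := h
  refine ⟨ψ.exs, ⟨m + N, ψ, qf, rfl⟩, fun x => ?_⟩
  rw [realize_exs]
  constructor
  · rintro ⟨v, hv⟩
    refine ⟨fun i => v (Fin.castAdd N i), (hiff x _).mpr ⟨fun j => v (Fin.natAdd m j), ?_⟩⟩
    have hsplit : Fin.append (fun i => v (Fin.castAdd N i)) (fun j => v (Fin.natAdd m j)) = v := by
      funext i
      induction i using Fin.addCases with
      | left j => simp [Fin.append_left]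
      | right j => simp [Fin.append_right]
    rw [hsplit]; exact hv
  · rintro ⟨y, hy⟩
    obtain ⟨z, hz⟩ := (hiff x y).mp hy
    exact ⟨_, hz⟩

end Stmt15

namespace Stmt15
open FirstOrder Language BoundedFormula

variable {G : Type*} [Group G] {Aset : Set G} {m : ℕ}

lemma ExRel.formula (w : FreeGroup (Fin m)) (φ : grpLang.Formula (↥Aset ⊕ Fin 1))
    (hφ : _root_.IsExistential φ) :
    ExRel Aset m fun (_ : G) y =>
      φ.Realize (Sum.elim Subtype.val fun _ => FreeGroup.lift y w) := by
  obtain ⟨n, ψ, hQF, rfl⟩ := hφ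
  set u : Fin (1 + n) := Fin.castAdd n 0 with hu
  set F : (↥Aset ⊕ Fin 1) ⊕ Fin n → (↥Aset ⊕ Fin 1) ⊕ Fin (m + (1 + n)) :=
    Sum.elim (Sum.elim (fun a => Sum.inl (Sum.inl a))
        (fun _ => Sum.inr (Fin.natAdd m u)))
      (fun j => Sum.inr (Fin.natAdd m (Fin.natAdd 1 j))) with hF
  obtain ⟨ψ', hq', hr'⟩ := qf_relabel (G := G) F hQF
  refine ⟨1 + n,
    ((Term.var (Sum.inr (Fin.natAdd m u))).bdEqual
      (wordTerm (fun i => Term.var (Sum.inr (Fin.castAdd (1 + n) i))) w.toWord)) ⊓ ψ',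
    ((IsAtomic.equal _ _).isQF).inf hq', fun x y => ?_⟩
  set v : ↥Aset ⊕ Fin 1 → G := Sum.elim Subtype.val fun _ => x with hv
  have hterm : ∀ z : Fin (1 + n) → G,
      (wordTerm (fun i => Term.var (Sum.inr (Fin.castAdd (1 + n) i))) w.toWord).realize
        (Sum.elim v (Fin.append y z)) = FreeGroup.lift y w := by
    intro z
    rw [realize_wordTerm']
    have e0 : (fun i => Term.realize (Sum.elim v (Fin.append y z))
        (Term.var (Sum.inr (Fin.castAdd (1 + n) i)) : grpLang.Term ((↥Aset ⊕ Fin 1) ⊕ Fin (m + (1 + n))))) = y := by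
      funext i; simp [Fin.append_left]
    rw [e0]
  have hpsi : ∀ z : Fin (1 + n) → G,
      ψ'.Realize v (Fin.append y z) ↔
        ψ.Realize (Sum.elim Subtype.val fun _ => z u) (fun j => z (Fin.natAdd 1 j)) := by
    intro z
    rw [hr']
    have e1 : (fun a => Sum.elim v (Fin.append y z) (F (Sum.inl a)))
        = (Sum.elim Subtype.val fun _ => z u : ↥Aset ⊕ Fin 1 → G) := by
      funext a
      cases a with
      | inl a => rfl
      | inr j => simp [hF, Fin.append_right]
    have e2 : (fun j => Sum.elim v (Fin.append y z) (F (Sum.inr j)))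
        = fun j => z (Fin.natAdd 1 j) := by
      funext j; simp [hF, Fin.append_right]
    rw [e1, e2]
  rw [show (fun (_ : G) y => Formula.Realize ψ.exs (Sum.elim Subtype.val fun _ => FreeGroup.lift y w)) x y ↔ Formula.Realize ψ.exs (Sum.elim Subtype.val fun _ => FreeGroup.lift y w) from Iff.rfl, realize_exs]
  constructor
  · rintro ⟨zw, hzw⟩
    refine ⟨Fin.append (fun _ => FreeGroup.lift y w) zw, ?_⟩
    rw [realize_inf, realize_bdEqual, hterm, hpsi]
    have e3 : Fin.append (fun _ => FreeGroup.lift y w) zw u = FreeGroup.lift y w := by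
      simp [hu, Fin.append_left]
    have e4 : (fun j => Fin.append (fun _ => FreeGroup.lift y w) zw (Fin.natAdd 1 j)) = zw := by
      funext j; simp [Fin.append_right]
    constructor
    · rw [Term.realize_var, Sum.elim_inr, Fin.append_right, e3]
    · rw [e3, e4]; exact hzw
  · rintro ⟨z, hz⟩
    rw [realize_inf, realize_bdEqual, hterm, hpsi, Term.realize_var, Sum.elim_inr,
      Fin.append_right] at hz
    exact ⟨fun j => z (Fin.natAdd 1 j), hz.1 ▸ hz.2⟩

end Stmt15

namespace Stmt15

lemma exists_injective_seq {α : Type*} (S : ℕ → Set α)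
    (h : ∀ (n : ℕ) (t : Finset α), ∃ x ∈ S n, x ∉ t) :
    ∃ x : ℕ → α, (∀ n, x n ∈ S n) ∧ ∀ i j, i ≠ j → x i ≠ x j := by
  classical
  choose F hF1 hF2 using h
  let g : ℕ → Finset α := fun n => Nat.rec ∅ (fun k acc => insert (F k acc) acc) n
  have hg : ∀ n, g (n + 1) = insert (F n (g n)) (g n) := fun n => rfl
  have mono : ∀ i j, i ≤ j → g i ⊆ g j := by
    intro i j hij
    induction hij with
    | refl => exact subset_rfl
    | step h ih => exact ih.trans (by rw [hg]; exact Finset.subset_insert _ _)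
  refine ⟨fun n => F n (g n), fun n => hF1 _ _, ?_⟩
  have hx : ∀ i j, i < j → F i (g i) ≠ F j (g j) := by
    intro i j hij hEq
    have h1 : F i (g i) ∈ g j := mono (i + 1) j hij (by rw [hg]; exact Finset.mem_insert_self _ _)
    exact hF2 j (g j) (hEq ▸ h1)
  intro i j hne
  rcases lt_or_gt_of_ne hne with h' | h'
  · exact hx i j h'
  · exact (hx j i h').symm

end Stmt15


/-- Let `G` be a finitely generated equationally noetherian group and
`A` a subgroup of `G`. Let `K` be a finitely generated subgroup of `G` such that
`acl^∃(A)` is a proper subgroup of `K`. Then there exists a stable sequence of pairwise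
distinct homomorphisms `hₙ : K → G` with trivial stable kernel which bounds `acl^∃(A)`
in the limit. -/
theorem exists_stable_sequence_bounding_aclE {G : Type*} [Group G] [Group.FG G]
    (hEN : EqNoetherian G) (A : Subgroup G)
    (K : Subgroup G) (hK : K.FG)
    (hsub : aclE (A : Set G) ⊆ (K : Set G)) (hne : aclE (A : Set G) ≠ (K : Set G)) :
    ∃ h : ℕ → (↥K →* G),
      (∀ m n : ℕ, m ≠ n → h m ≠ h n) ∧
      StableSeq h ∧ TrivialStableKernel h ∧
      (∀ k : ↥K, (k : G) ∈ aclE (A : Set G) →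
        ∃ B : Finset G, ∀ᶠ n in Filter.atTop, h n k ∈ B) := by
  classical
  obtain ⟨b, hbK, hbA⟩ := Set.exists_of_ssubset (ssubset_of_subset_of_ne hsub hne)
  -- a finite generating family for K, with positive length
  obtain ⟨Sf, hSf⟩ := hK
  set l : List G := 1 :: Sf.toList with hl
  set mg := l.length with hmgdef
  have hmg : 0 < mg := by simp [hmgdef, hl]
  set kb : Fin mg → G := l.get with hkb
  have hrange : Subgroup.closure (Set.range kb) = K := by
    apply le_antisymm
    · rw [Subgroup.closure_le]
      rintro x ⟨i, rfl⟩
      have hmem : kb i ∈ l := List.get_mem l i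
      rw [hl, List.mem_cons] at hmem
      rcases hmem with h1 | h1
      · rw [h1]; exact K.one_mem
      · have : kb i ∈ (Sf : Set G) := Finset.mem_toList.mp h1
        rw [← hSf]
        exact Subgroup.subset_closure this
    · rw [← hSf]
      apply Subgroup.closure_mono
      intro s hs
      have : s ∈ l := by
        rw [hl, List.mem_cons]
        exact Or.inr (Finset.mem_toList.mpr hs)
      obtain ⟨i, hi⟩ := List.mem_iff_get.mp this
      exact ⟨i, hi⟩
  set π : FreeGroup (Fin mg) →* G := FreeGroup.lift kb with hπ
  have hπrange : π.range = K := by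
    rw [hπ, FreeGroup.range_lift_eq_closure, hrange]
  have hmemπ : ∀ k : ↥K, ∃ w : FreeGroup (Fin mg), π w = (k : G) := by
    intro k
    have : (k : G) ∈ π.range := by rw [hπrange]; exact k.2
    exact this
  choose wd hwd using hmemπ
  -- equational noetherianity applied to the relations of the generating family
  obtain ⟨S₀, hS₀sub, hS₀fin, hS₀iff⟩ :=
    hEN mg hmg (Monoid.Coprod.inr '' (π.ker : Set (FreeGroup (Fin mg))))
  set R₀ : Set (FreeGroup (Fin mg)) :=
    Monoid.Coprod.inr ⁻¹' S₀ ∩ (π.ker : Set (FreeGroup (Fin mg))) with hR₀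
  have hR₀fin : R₀.Finite :=
    (hS₀fin.preimage Monoid.Coprod.inr_injective.injOn).inter_of_left _
  have hEN' : ∀ yy : Fin mg → G, (∀ r ∈ R₀, FreeGroup.lift yy r = 1) →
      ∀ r ∈ π.ker, FreeGroup.lift yy r = 1 := by
    intro yy hy r hr
    set f := Monoid.Coprod.lift (MonoidHom.id G) (FreeGroup.lift yy) with hf
    have h1 : ∀ s ∈ S₀, f s = 1 := by
      intro s hs
      obtain ⟨r', hr', rfl⟩ := hS₀sub hs
      have hr'R : r' ∈ R₀ := ⟨hs, hr'⟩
      have := hy r' hr'R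
      simpa [hf, Monoid.Coprod.lift_apply_inr] using this
    have h2 := (hS₀iff f (Monoid.Coprod.lift_comp_inl _ _)).mp h1 (Monoid.Coprod.inr r)
      ⟨r, hr, rfl⟩
    simpa [hf, Monoid.Coprod.lift_apply_inr] using h2
  -- how to build homomorphisms K → G out of tuples satisfying the relations R₀
  have hom_ex : ∀ yy : Fin mg → G, (∀ r ∈ R₀, FreeGroup.lift yy r = 1) →
      ∃ h : ↥K →* G, ∀ k : ↥K, h k = FreeGroup.lift yy (wd k) := by
    intro yy hy
    have key : ∀ w w', π w = π w' → FreeGroup.lift yy w = FreeGroup.lift yy w' := by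
      intro w w' hww
      have hk : w * w'⁻¹ ∈ π.ker := by
        rw [MonoidHom.mem_ker, map_mul, map_inv, hww, mul_inv_cancel]
      have := hEN' yy hy _ hk
      rw [map_mul, map_inv] at this
      exact mul_inv_eq_one.mp this
    refine ⟨⟨⟨fun k => FreeGroup.lift yy (wd k), ?_⟩, ?_⟩, fun k => rfl⟩
    · have := key (wd 1) 1 (by rw [hwd]; simp)
      simpa using this
    · intro k₁ k₂
      have := key (wd (k₁ * k₂)) (wd k₁ * wd k₂) (by simp [map_mul, hwd])
      simpa [map_mul] using this
  -- countability and an enumeration of K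
  haveI : Countable (FreeGroup (Fin mg)) :=
    Function.Surjective.countable (f := fun L : List (Fin mg × Bool) => FreeGroup.mk L)
      (fun x => ⟨x.toWord, FreeGroup.mk_toWord⟩)
  haveI : Countable ↥K := by
    refine Function.Surjective.countable
      (f := fun w : FreeGroup (Fin mg) => (⟨π w, ?_⟩ : ↥K)) ?_
    · rw [← hπrange]; exact ⟨w, rfl⟩
    · intro k
      exact ⟨wd k, Subtype.ext (hwd k)⟩
  obtain ⟨c, hc⟩ := exists_surjective_nat ↥K
  -- the algebraicity formulas of elements of the existential algebraic closure
  have phiSpec : ∀ j : ℕ, (c j : G) ∈ aclE (A : Set G) →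
      ∃ φ : grpLang.Formula (↥(A : Set G) ⊕ Fin 1), IsExistential φ ∧
        {x : G | φ.Realize (Sum.elim Subtype.val fun _ => x)}.Finite ∧
        φ.Realize (Sum.elim Subtype.val fun _ => (c j : G)) := fun j h => h
  choose phi hphi1 hphi2 hphi3 using phiSpec
  set bK : ↥K := ⟨b, hbK⟩ with hbKdef
  set R₀l : List (FreeGroup (Fin mg)) := hR₀fin.toFinset.toList with hR₀l
  have hR₀mem : ∀ r, r ∈ R₀l ↔ r ∈ R₀ := by
    intro r
    rw [hR₀l, Finset.mem_toList, Set.Finite.mem_toFinset]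
  -- the conditions defining our system of existential formulas
  set Cond : ℕ → G → (Fin mg → G) → Prop := fun j x y =>
    (∀ h : (c j : G) ∈ aclE (A : Set G),
        (phi j h).Realize (Sum.elim Subtype.val fun _ => FreeGroup.lift y (wd (c j)))) ∧
    (c j ≠ 1 → FreeGroup.lift y (wd (c j)) ≠ 1) with hCond
  have hCondEx : ∀ j, Stmt15.ExRel (A : Set G) mg (Cond j) := by
    intro j
    apply Stmt15.ExRel.inf
    · by_cases hj : (c j : G) ∈ aclE (A : Set G)
      · exact (Stmt15.ExRel.formula (wd (c j)) (phi j hj) (hphi1 j hj)).of_iff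
          (fun x y => ⟨fun H => H hj, fun H _ => H⟩)
      · exact Stmt15.ExRel.true.of_iff
          (fun x y => ⟨fun _ => trivial, fun _ h => absurd h hj⟩)
    · by_cases h1 : c j = 1
      · exact Stmt15.ExRel.true.of_iff
          (fun x y => ⟨fun _ => trivial, fun _ h => absurd h1 h⟩)
      · exact (Stmt15.ExRel.ne_one (wd (c j))).of_iff
          (fun x y => ⟨fun H => H h1, fun H _ => H⟩)
  -- the decreasing system of infinitely-realized existential conditions
  set Sset : ℕ → Set G := fun n =>
    {x | ∃ y : Fin mg → G,
      ((∀ r ∈ R₀l, FreeGroup.lift y r = 1) ∧ x = FreeGroup.lift y (wd bK)) ∧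
      ∀ j ∈ List.range (n + 1), Cond j x y} with hSset
  have hPn : ∀ n, Stmt15.ExRel (A : Set G) mg (fun x y =>
      ((∀ r ∈ R₀l, FreeGroup.lift y r = 1) ∧ x = FreeGroup.lift y (wd bK)) ∧
      ∀ j ∈ List.range (n + 1), Cond j x y) := by
    intro n
    exact ((Stmt15.ExRel.forall_list R₀l _ (fun r => Stmt15.ExRel.eq_one r)).inf
        (Stmt15.ExRel.x_eq (wd bK))).inf
      (Stmt15.ExRel.forall_list (List.range (n + 1)) Cond hCondEx)
  have hbS : ∀ n, b ∈ Sset n := by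
    intro n
    refine ⟨kb, ⟨⟨?_, ?_⟩, ?_⟩⟩
    · intro r hr
      have : r ∈ π.ker := ((hR₀mem r).mp hr).2
      exact this
    · exact (hwd bK).symm
    · intro j _
      constructor
      · intro h
        have := hphi3 j h
        rw [hwd]
        exact this
      · intro h1
        rw [hwd]
        exact fun e => h1 (by exact_mod_cast e)
  have hSinf : ∀ n, (Sset n).Infinite := by
    intro n
    by_contra hfin
    rw [Set.not_infinite] at hfin
    obtain ⟨φ, hex, hiff⟩ := (hPn n).exists_formula
    have hseteq : {x : G | φ.Realize (Sum.elim Subtype.val fun _ => x)} = Sset n :=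
      Set.ext fun x => hiff x
    exact hbA ⟨φ, hex, by rw [hseteq]; exact hfin, (hiff b).mpr (hbS n)⟩
  -- choose pairwise distinct realizations
  obtain ⟨x, hxS, hxne⟩ := Stmt15.exists_injective_seq Sset
    (fun n t => (hSinf n).exists_notMem_finset t)
  choose y hy using hxS
  have hyR : ∀ n, ∀ r ∈ R₀, FreeGroup.lift (y n) r = 1 := by
    intro n r hr
    exact (hy n).1.1 r ((hR₀mem r).mpr hr)
  choose h hh using fun n => hom_ex (y n) (hyR n)
  have hxb : ∀ n, h n bK = x n := by
    intro n
    rw [hh n bK, ← (hy n).1.2]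
  have hne1 : ∀ k : ↥K, k ≠ 1 → ∀ᶠ n in Filter.atTop, h n k ≠ 1 := by
    intro k hk1
    obtain ⟨j, hj⟩ := hc k
    rw [Filter.eventually_atTop]
    refine ⟨j, fun n hn => ?_⟩
    have hcj := ((hy n).2 j (List.mem_range.mpr (by omega))).2 (by rw [hj]; exact hk1)
    rw [hh n k, ← hj]
    exact hcj
  refine ⟨h, ?_, ?_, ?_, ?_⟩
  · intro m' n' hmn hEq
    exact hxne m' n' hmn (by rw [← hxb, ← hxb, hEq])
  · intro k
    by_cases hk1 : k = 1
    · exact Or.inl (Filter.Eventually.of_forall fun n => by rw [hk1, map_one])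
    · exact Or.inr (hne1 k hk1)
  · intro k hk
    by_contra hk1
    obtain ⟨n, h1, h2⟩ := (hk.and (hne1 k hk1)).exists
    exact h2 h1
  · intro k hkacl
    obtain ⟨j, hj⟩ := hc k
    have hmem : (c j : G) ∈ aclE (A : Set G) := by rw [hj]; exact hkacl
    refine ⟨(hphi2 j hmem).toFinset, ?_⟩
    rw [Filter.eventually_atTop]
    refine ⟨j, fun n hn => ?_⟩
    have hcj := ((hy n).2 j (List.mem_range.mpr (by omega))).1 hmem
    rw [Set.Finite.mem_toFinset]
    rw [hh n k, ← hj]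
    exact hcj
end

section
/- Let G be a finitely generated equationally noetherian group, let G* be an elementary extension of G (in the language of groups), and let C be a finitely generated subgroup of G*. Then there exists a stable sequence of group homomorphisms (fₙ : C → G) with trivial stable kernel which strongly converges to C. -/
open FirstOrder Filter

namespace S16

open FirstOrder Language

/-- Group-language terms. -/
def tone {α : Type*} : grpLang.Term α := Term.func GrpFunc.one ![]
def tmul {α : Type*} (t s : grpLang.Term α) : grpLang.Term α := Term.func GrpFunc.mul ![t, s]
def tinv {α : Type*} (t : grpLang.Term α) : grpLang.Term α := Term.func GrpFunc.inv ![t]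

variable {M : Type*} [Group M]

@[simp] lemma realize_tone {α : Type*} (v : α → M) : tone.realize v = 1 := rfl
@[simp] lemma realize_tmul {α : Type*} (v : α → M) (t s : grpLang.Term α) :
    (tmul t s).realize v = t.realize v * s.realize v := rfl
@[simp] lemma realize_tinv {α : Type*} (v : α → M) (t : grpLang.Term α) :
    (tinv t).realize v = (t.realize v)⁻¹ := rfl

def listTerm {α : Type*} : List (α × Bool) → grpLang.Term α
  | [] => tone
  | x :: l => tmul (cond x.2 (Term.var x.1) (tinv (Term.var x.1))) (listTerm l)

lemma realize_listTerm {α : Type*} (v : α → M) : ∀ l : List (α × Bool),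
    (listTerm l).realize v = (l.map fun x => cond x.2 (v x.1) (v x.1)⁻¹).prod
  | [] => by simp [listTerm]
  | x :: l => by
      cases hx : x.2 <;>
        simp [listTerm, hx, realize_listTerm v l]

def wordTerm {α : Type*} [DecidableEq α] (w : FreeGroup α) : grpLang.Term α := listTerm w.toWord

lemma realize_wordTerm {α : Type*} [DecidableEq α] (v : α → M) (w : FreeGroup α) :
    (wordTerm w).realize v = FreeGroup.lift v w := by
  rw [wordTerm, realize_listTerm, ← FreeGroup.lift_mk, FreeGroup.mk_toWord]

lemma lift_map {α β : Type*} (f : α → β) (v : β → M) (w : FreeGroup α) :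
    FreeGroup.lift v (FreeGroup.map f w) = FreeGroup.lift (v ∘ f) w := by
  have h : (FreeGroup.lift v).comp (FreeGroup.map f) = FreeGroup.lift (v ∘ f) :=
    FreeGroup.ext_hom _ _ fun a => by
      simp [FreeGroup.map.of, FreeGroup.lift_apply_of, Function.comp]
  exact DFunLike.congr_fun h w

def conjList {α : Type*} {n : ℕ} : List (grpLang.BoundedFormula α n) → grpLang.BoundedFormula α n
  | [] => ⊤
  | φ :: l => φ ⊓ conjList l

lemma realize_conjList {α : Type*} {n : ℕ} (v : α → M) (xs : Fin n → M) :
    ∀ l : List (grpLang.BoundedFormula α n),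
      (conjList l).Realize v xs ↔ ∀ φ ∈ l, φ.Realize v xs
  | [] => by simp [conjList]
  | φ :: l => by
      simp [conjList, BoundedFormula.realize_inf, realize_conjList v xs l]

def constraintForm {k m : ℕ} (w : FreeGroup (Fin k)) (j : Fin m) (flag : Bool) :
    grpLang.BoundedFormula (Fin m) k :=
  cond flag
    (Term.bdEqual (wordTerm (FreeGroup.map Sum.inr w)) (Term.var (Sum.inl j)))
    (Term.bdEqual (wordTerm (FreeGroup.map Sum.inr w)) (Term.var (Sum.inl j))).not

lemma realize_constraintForm {k m : ℕ} (w : FreeGroup (Fin k)) (j : Fin m) (flag : Bool)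
    (v : Fin m → M) (xs : Fin k → M) :
    (constraintForm w j flag).Realize v xs ↔
      cond flag (FreeGroup.lift xs w = v j) (FreeGroup.lift xs w ≠ v j) := by
  have hterm : (wordTerm (FreeGroup.map Sum.inr w) : grpLang.Term (Fin m ⊕ Fin k)).realize
      (Sum.elim v xs) = FreeGroup.lift xs w := by
    rw [realize_wordTerm, lift_map, Sum.elim_comp_inr]
  cases flag <;>
    simp [constraintForm, BoundedFormula.realize_not, BoundedFormula.realize_bdEqual, hterm]

def bigForm {k m : ℕ} (dat : Fin m → FreeGroup (Fin k) × Bool) : grpLang.Formula (Fin m) :=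
  (conjList ((List.finRange m).map fun j => constraintForm (dat j).1 j (dat j).2)).exs

lemma realize_bigForm {k m : ℕ} (dat : Fin m → FreeGroup (Fin k) × Bool) (v : Fin m → M) :
    (bigForm dat).Realize v ↔ ∃ xs : Fin k → M, ∀ j : Fin m,
      cond (dat j).2 (FreeGroup.lift xs (dat j).1 = v j) (FreeGroup.lift xs (dat j).1 ≠ v j) := by
  rw [bigForm, BoundedFormula.realize_exs]
  refine exists_congr fun xs => ?_
  rw [realize_conjList]
  constructor
  · intro h j
    have := h _ (List.mem_map.2 ⟨j, List.mem_finRange j, rfl⟩)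
    rwa [realize_constraintForm] at this
  · intro h φ hφ
    obtain ⟨j, -, rfl⟩ := List.mem_map.1 hφ
    rw [realize_constraintForm]
    exact h j

end S16
namespace S16

lemma EC {Gs : Type*} [Group Gs] (G : Subgroup Gs) (hel : ElementarySub G) (k : ℕ)
    (P Q : Finset (FreeGroup (Fin k) × ↥G)) (x : Fin k → Gs)
    (hP : ∀ p ∈ P, FreeGroup.lift x p.1 = G.subtype p.2)
    (hQ : ∀ q ∈ Q, FreeGroup.lift x q.1 ≠ G.subtype q.2) :
    ∃ g : Fin k → ↥G, (∀ p ∈ P, FreeGroup.lift g p.1 = p.2) ∧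
      (∀ q ∈ Q, FreeGroup.lift g q.1 ≠ q.2) := by
  classical
  set l : List ((FreeGroup (Fin k) × ↥G) × Bool) :=
    P.toList.map (·, true) ++ Q.toList.map (·, false) with hl
  set m := l.length with hm
  set dat : Fin m → FreeGroup (Fin k) × Bool := fun j => ((l.get j).1.1, (l.get j).2) with hdat
  set a : Fin m → ↥G := fun j => (l.get j).1.2 with ha
  have hmem : ∀ j : Fin m, (l.get j ∈ P.toList.map (·, true) ∧ (l.get j).1 ∈ P ∧ (l.get j).2 = true)
      ∨ ((l.get j).1 ∈ Q ∧ (l.get j).2 = false) := by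
    intro j
    have : l.get j ∈ l := l.get_mem j
    rcases List.mem_append.1 this with h | h
    · obtain ⟨p, hp, hpe⟩ := List.mem_map.1 h
      exact Or.inl ⟨h, by rw [← hpe]; exact ⟨Finset.mem_toList.1 hp, rfl⟩⟩
    · obtain ⟨q, hq, hqe⟩ := List.mem_map.1 h
      exact Or.inr (by rw [← hqe]; exact ⟨Finset.mem_toList.1 hq, rfl⟩)
  have hGs : (bigForm dat).Realize (fun j => G.subtype (a j)) := by
    rw [realize_bigForm]
    refine ⟨x, fun j => ?_⟩
    rcases hmem j with ⟨-, hp, hflag⟩ | ⟨hq, hflag⟩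
    · simp only [hdat, ha, hflag]
      exact hP _ hp
    · simp only [hdat, ha, hflag]
      exact hQ _ hq
  have hG : (bigForm dat).Realize a := (hel m (bigForm dat) a).1 hGs
  rw [realize_bigForm] at hG
  obtain ⟨g, hg⟩ := hG
  refine ⟨g, ?_, ?_⟩
  · intro p hp
    have : (p, true) ∈ l := List.mem_append.2 (Or.inl (List.mem_map.2 ⟨p, Finset.mem_toList.2 hp, rfl⟩))
    obtain ⟨j, hj⟩ := List.mem_iff_get.1 this
    have := hg j
    simp only [hdat, ha, hj] at this
    exact this
  · intro q hq
    have : (q, false) ∈ l := List.mem_append.2 (Or.inr (List.mem_map.2 ⟨q, Finset.mem_toList.2 hq, rfl⟩))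
    obtain ⟨j, hj⟩ := List.mem_iff_get.1 this
    have := hg j
    simp only [hdat, ha, hj] at this
    exact this

end S16

/-- Let `G` be a finitely generated equationally noetherian group,
`G*` an elementary extension of `G` and `C` a finitely generated subgroup of `G*`. Then
there exists a stable sequence of homomorphisms `fₙ : C → G` with trivial stable kernel
which strongly converges to `C`. (Here `G` is realized as a subgroup of `G*` whose
inclusion is elementary.) -/
theorem exists_strongly_converging_sequence {Gs : Type*} [Group Gs] (G : Subgroup Gs)
    (hfg : Group.FG ↥G) (hel : ElementarySub G) (hEN : EqNoetherian ↥G)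
    (C : Subgroup Gs) (hC : C.FG) :
    ∃ f : ℕ → (↥C →* ↥G), StronglyConverges G.subtype C f := by
  classical
  obtain ⟨T, hT⟩ := hC
  set tc := T.toList with htc
  set k := tc.length + 1 with hkdef
  have hk : 0 < k := Nat.succ_pos _
  set c : Fin k → Gs := fun i => if h : (i : ℕ) < tc.length then tc.get ⟨i, h⟩ else 1 with hc
  have hcC : ∀ i, c i ∈ C := by
    intro i
    rw [hc]
    dsimp only
    split
    · exact hT ▸ Subgroup.subset_closure (Finset.mem_coe.2 (Finset.mem_toList.1 (tc.get_mem _)))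
    · exact C.one_mem
  have hclos : Subgroup.closure (Set.range c) = C := by
    apply le_antisymm
    · rw [Subgroup.closure_le]
      rintro _ ⟨i, rfl⟩
      exact hcC i
    · conv_lhs => rw [← hT]
      rw [Subgroup.closure_le]
      intro t ht
      obtain ⟨j, hj⟩ := List.mem_iff_get.1 (Finset.mem_toList.2 ht)
      refine Subgroup.subset_closure (⟨⟨(j : ℕ), Nat.lt_succ_of_lt j.isLt⟩, ?_⟩ : t ∈ Set.range c)
      rw [hc]
      dsimp only
      rw [dif_pos j.isLt]
      exact hj
  set cC : Fin k → ↥C := fun i => ⟨c i, hcC i⟩ with hcCdef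
  set π : FreeGroup (Fin k) →* ↥C := FreeGroup.lift cC with hπ
  have hπc : ∀ w, ((π w : ↥C) : Gs) = FreeGroup.lift c w := by
    intro w
    have h : C.subtype.comp π = FreeGroup.lift c := by
      refine FreeGroup.ext_hom _ _ fun i => ?_
      simp [hπ, hcCdef, FreeGroup.lift_apply_of]
    have := DFunLike.congr_fun h w
    simpa using this
  have hπsurj : Function.Surjective π := by
    intro dd
    have hdd : (dd : Gs) ∈ (FreeGroup.lift c).range := by
      rw [FreeGroup.range_lift_eq_closure, hclos]; exact dd.2
    obtain ⟨w, hw⟩ := hdd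
    exact ⟨w, Subtype.ext (by rw [hπc]; exact hw)⟩
  haveI : Countable (FreeGroup (Fin k)) := FreeGroup.toWord_injective.countable
  obtain ⟨e, he⟩ := exists_surjective_nat (FreeGroup (Fin k))
  -- countability of G
  obtain ⟨TG, hTG⟩ := hfg.out
  set tg := TG.toList with htg
  set cg : Fin (tg.length + 1) → ↥G :=
    fun i => if h : (i : ℕ) < tg.length then tg.get ⟨i, h⟩ else 1 with hcg
  have hclosg : Subgroup.closure (Set.range cg) = (⊤ : Subgroup ↥G) := by
    apply le_antisymm le_top
    conv_lhs => rw [← hTG]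
    rw [Subgroup.closure_le]
    intro t ht
    obtain ⟨j, hj⟩ := List.mem_iff_get.1 (Finset.mem_toList.2 ht)
    refine Subgroup.subset_closure (⟨⟨(j : ℕ), Nat.lt_succ_of_lt j.isLt⟩, ?_⟩ : t ∈ Set.range cg)
    rw [hcg]
    dsimp only
    rw [dif_pos j.isLt]
    exact hj
  haveI : Countable (FreeGroup (Fin (tg.length + 1))) := FreeGroup.toWord_injective.countable
  haveI hGcount : Countable ↥G := by
    have hr : (FreeGroup.lift cg).range = ⊤ := by
      rw [FreeGroup.range_lift_eq_closure, hclosg]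
    exact (MonoidHom.range_eq_top.1 hr).countable
  obtain ⟨β, hβ⟩ := exists_surjective_nat ↥G
  -- equational noetherianity
  set W : Set (FreeGroup (Fin k)) := {w | FreeGroup.lift c w = 1} with hW
  obtain ⟨S₀, hS₀sub, hS₀fin, hS₀⟩ := hEN k hk (Monoid.Coprod.inr '' W)
  have hW₀fin : (Monoid.Coprod.inr ⁻¹' S₀ : Set (FreeGroup (Fin k))).Finite :=
    hS₀fin.preimage Monoid.Coprod.inr_injective.injOn
  set W₀ : Finset (FreeGroup (Fin k)) := hW₀fin.toFinset with hW₀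
  have hW₀W : ∀ w ∈ W₀, FreeGroup.lift c w = 1 := by
    intro w hw
    have hmem : Monoid.Coprod.inr w ∈ S₀ := by
      rw [hW₀, Set.Finite.mem_toFinset] at hw; exact hw
    obtain ⟨w', hw', hweq⟩ := hS₀sub hmem
    cases Monoid.Coprod.inr_injective hweq
    exact hw'
  have hENkey : ∀ g : Fin k → ↥G, (∀ w ∈ W₀, FreeGroup.lift g w = 1) →
      ∀ w, FreeGroup.lift c w = 1 → FreeGroup.lift g w = 1 := by
    intro g hg w hw
    set F := Monoid.Coprod.lift (MonoidHom.id ↥G) (FreeGroup.lift g) with hF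
    have hf1 : F.comp Monoid.Coprod.inl = MonoidHom.id ↥G := Monoid.Coprod.lift_comp_inl _ _
    have hall := (hS₀ F hf1).1 ?side (Monoid.Coprod.inr w) ⟨w, hw, rfl⟩
    · rw [hF, Monoid.Coprod.lift_apply_inr] at hall
      exact hall
    case side =>
      intro s hs
      obtain ⟨w', hw', rfl⟩ := hS₀sub hs
      have hw'0 : w' ∈ W₀ := by rw [hW₀, Set.Finite.mem_toFinset]; exact hs
      rw [hF, Monoid.Coprod.lift_apply_inr]
      exact hg w' hw'0
  -- enumeration of C
  set d : ℕ → ↥C := fun i => π (e i) with hd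
  have hdsurj : Function.Surjective d := by
    intro dd
    obtain ⟨w, hw⟩ := hπsurj dd
    obtain ⟨i, hi⟩ := he w
    refine ⟨i, ?_⟩
    rw [hd]
    dsimp only
    rw [hi, hw]
  set b : ℕ → ↥G :=
    fun i => if h : ((d i : ↥C) : Gs) ∈ G then ⟨((d i : ↥C) : Gs), h⟩ else 1 with hb
  -- stage systems
  set Pn : ℕ → Finset (FreeGroup (Fin k) × ↥G) := fun n =>
    W₀.image (fun w => (w, (1 : ↥G))) ∪
      ((Finset.range (n+1)).filter (fun i => (((d i : ↥C) : Gs) ∈ G))).image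
        (fun i => (e i, b i)) with hPn
  set Qn : ℕ → Finset (FreeGroup (Fin k) × ↥G) := fun n =>
    (((Finset.range (n+1)) ×ˢ (Finset.range (n+1))).filter
        (fun ij => (((d ij.1 : ↥C) : Gs) ∉ G))).image (fun ij => (e ij.1, β ij.2)) with hQn
  have hstage : ∀ n, ∃ g : Fin k → ↥G,
      (∀ p ∈ Pn n, FreeGroup.lift g p.1 = p.2) ∧ (∀ q ∈ Qn n, FreeGroup.lift g q.1 ≠ q.2) := by
    intro n
    apply S16.EC G hel k (Pn n) (Qn n) c
    · intro p hp
      rw [hPn] at hp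
      rcases Finset.mem_union.1 hp with h | h
      · obtain ⟨w, hw, rfl⟩ := Finset.mem_image.1 h
        simpa using hW₀W w hw
      · obtain ⟨i, hi, rfl⟩ := Finset.mem_image.1 h
        have hiG : (((d i : ↥C) : Gs)) ∈ G := (Finset.mem_filter.1 hi).2
        have h1 : FreeGroup.lift c (e i) = ((d i : ↥C) : Gs) := (hπc (e i)).symm
        show FreeGroup.lift c (e i) = G.subtype (b i)
        rw [h1, hb]
        dsimp only
        rw [dif_pos hiG]
        rfl
    · intro q hq
      rw [hQn] at hq
      obtain ⟨ij, hij, rfl⟩ := Finset.mem_image.1 hq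
      have hiG : (((d ij.1 : ↥C) : Gs)) ∉ G := (Finset.mem_filter.1 hij).2
      have h1 : FreeGroup.lift c (e ij.1) = ((d ij.1 : ↥C) : Gs) := (hπc (e ij.1)).symm
      show FreeGroup.lift c (e ij.1) ≠ G.subtype (β ij.2)
      intro hcon
      apply hiG
      rw [← h1, hcon]
      exact (β ij.2).2
  choose g hgP hgQ using hstage
  have hkill : ∀ n, ∀ w ∈ W₀, FreeGroup.lift (g n) w = 1 := by
    intro n w hw
    have hp : (w, (1 : ↥G)) ∈ Pn n := by
      rw [hPn]
      exact Finset.mem_union_left _ (Finset.mem_image.2 ⟨w, hw, rfl⟩)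
    exact hgP n _ hp
  have hker : ∀ n, π.ker ≤ (FreeGroup.lift (g n)).ker := by
    intro n w hw
    rw [MonoidHom.mem_ker] at hw ⊢
    have hwc : FreeGroup.lift c w = 1 := by
      rw [← hπc, hw]
      simp
    exact hENkey (g n) (hkill n) w hwc
  set finv : ↥C → FreeGroup (Fin k) := Function.surjInv hπsurj with hfinvdef
  have hfr : Function.RightInverse finv π := Function.rightInverse_surjInv hπsurj
  set f : ℕ → (↥C →* ↥G) :=
    fun n => π.liftOfRightInverse finv hfr ⟨FreeGroup.lift (g n), hker n⟩ with hfdef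
  have hfval : ∀ n w, f n (π w) = FreeGroup.lift (g n) w := by
    intro n w
    rw [hfdef]
    exact π.liftOfRightInverse_comp_apply finv hfr ⟨FreeGroup.lift (g n), hker n⟩ w
  -- the two key facts
  have fact3 : ∀ (dd : ↥C) (b' : ↥G), (dd : Gs) = G.subtype b' →
      ∀ᶠ n in Filter.atTop, f n dd = b' := by
    intro dd b' hddb
    obtain ⟨i, rfl⟩ := hdsurj dd
    have hiG : (((d i : ↥C) : Gs)) ∈ G := by rw [hddb]; exact b'.2
    have hb' : b' = b i := by
      apply Subtype.ext
      rw [hb]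
      dsimp only
      rw [dif_pos hiG]
      exact hddb.symm
    rw [Filter.eventually_atTop]
    refine ⟨i, fun n hn => ?_⟩
    have hp : (e i, b i) ∈ Pn n := by
      rw [hPn]
      refine Finset.mem_union_right _ (Finset.mem_image.2 ⟨i, ?_, rfl⟩)
      exact Finset.mem_filter.2 ⟨Finset.mem_range.2 (Nat.lt_succ_of_le hn), hiG⟩
    calc f n (d i) = FreeGroup.lift (g n) (e i) := hfval n (e i)
      _ = b i := hgP n _ hp
      _ = b' := hb'.symm
  have fact4 : ∀ (dd : ↥C) (b' : ↥G), (∃ᶠ n in Filter.atTop, f n dd = b') →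
      (dd : Gs) = G.subtype b' := by
    intro dd b' hfreq
    obtain ⟨i, rfl⟩ := hdsurj dd
    by_cases h : (((d i : ↥C) : Gs)) ∈ G
    · have hev := fact3 (d i) ⟨((d i : ↥C) : Gs), h⟩ rfl
      obtain ⟨n, hn1, hn2⟩ := (hfreq.and_eventually hev).exists
      have hbb : b' = (⟨((d i : ↥C) : Gs), h⟩ : ↥G) := hn1.symm.trans hn2
      rw [hbb]
      rfl
    · obtain ⟨J, hJ⟩ := hβ b'
      have hev : ∀ᶠ n in Filter.atTop, f n (d i) ≠ b' := by
        rw [Filter.eventually_atTop]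
        refine ⟨max i J, fun n hn => ?_⟩
        have hq : (e i, β J) ∈ Qn n := by
          rw [hQn]
          refine Finset.mem_image.2 ⟨(i, J), Finset.mem_filter.2 ⟨Finset.mem_product.2
            ⟨Finset.mem_range.2 (Nat.lt_succ_of_le (le_trans (le_max_left i J) hn)),
             Finset.mem_range.2 (Nat.lt_succ_of_le (le_trans (le_max_right i J) hn))⟩, h⟩, rfl⟩
        have hne := hgQ n _ hq
        intro hcon
        apply hne
        show FreeGroup.lift (g n) (e i) = β J
        rw [← hfval n (e i)]
        show f n (d i) = β J
        rw [hcon, ← hJ]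
      obtain ⟨n, hn1, hn2⟩ := (hfreq.and_eventually hev).exists
      exact absurd hn1 hn2
  refine ⟨f, ?_, ?_, fact3, fact4⟩
  · -- StableSeq
    intro dd
    by_cases h : (dd : Gs) ∈ G
    · by_cases h1 : dd = 1
      · left
        subst h1
        have : ((1 : ↥C) : Gs) = G.subtype 1 := by simp
        exact fact3 1 1 this
      · right
        have hev := fact3 dd ⟨(dd : Gs), h⟩ rfl
        refine hev.mono fun n hn => ?_
        rw [hn]
        intro hcon
        apply h1
        have h2 : ((dd : Gs)) = 1 := by simpa using Subtype.ext_iff.1 hcon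
        exact Subtype.ext (by simpa using h2)
    · right
      have hnf : ¬ ∃ᶠ n in Filter.atTop, f n dd = 1 := by
        intro hf
        apply h
        have := fact4 dd 1 hf
        rw [this]
        simpa using G.one_mem
      rw [Filter.not_frequently] at hnf
      exact hnf.mono fun n hn => hn
  · -- TrivialStableKernel
    intro dd hev
    have := fact4 dd 1 hev.frequently
    exact Subtype.ext (by simpa using this)
end

section
/- Let L be a first-order language, M an L-structure, A a subset of M, and ā, b̄ ∈ Mⁿ. Then tp^∃(ā/A) ⊆ tp^∃(b̄/A) if and only if there exist an elementary extension N of M and an L-embedding f : N → N fixing A pointwise and sending ā to b̄. -/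
open FirstOrder Filter

section StepAuxSection

open FirstOrder Filter FirstOrder.Language FirstOrder.Language.Structure

universe u v w

namespace StepAux

variable {L : FirstOrder.Language.{v, w}}

/-- Build an `L`-embedding from a map preserving and reflecting atomic formulas. -/
noncomputable def embeddingOfAtomic {P Q : Type*} [L.Structure P] [L.Structure Q]
    (f : P → Q)
    (h : ∀ (k : ℕ) (φ : L.Formula (Fin k)), φ.IsAtomic →
      ∀ v : Fin k → P, (φ.Realize (f ∘ v) ↔ φ.Realize v)) :
    P ↪[L] Q where
  toFun := f
  inj' := by
    intro x y hxy
    have := h 2 (Term.equal (Term.var 0) (Term.var 1)) (BoundedFormula.IsAtomic.equal _ _)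
      (fun i => if i = 0 then x else y)
    simp only [Formula.realize_equal, Term.realize_var, Function.comp_apply] at this
    simpa [hxy] using this.mp (by simpa using hxy)
  map_fun' := by
    intro m F x
    have := h (m + 1)
      (Term.equal (Term.func F (fun i => Term.var i.castSucc)) (Term.var (Fin.last m)))
      (BoundedFormula.IsAtomic.equal _ _) (Fin.snoc x (funMap F x))
    simp only [Formula.realize_equal, Term.realize_func, Term.realize_var,
      Function.comp_apply] at this
    have h2 : ∀ i : Fin m, (Fin.snoc x (funMap F x) : Fin (m+1) → P) i.castSucc = x i := by
      simp
    have h3 : (Fin.snoc x (funMap F x) : Fin (m+1) → P) (Fin.last m) = funMap F x := by simp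
    rw [show (fun i : Fin m => (Fin.snoc x (funMap F x) : Fin (m+1) → P) i.castSucc) = x
        from funext h2, h3] at this
    have := this.mpr rfl
    simp only [Function.comp_def]
    rw [← this]
    congr 1
    funext i
    simp
  map_rel' := by
    intro m R x
    have := h m (R.formula Term.var) (by
      have : (R.formula Term.var).IsAtomic := by
        apply BoundedFormula.IsAtomic.rel
      exact this) x
    simpa [Formula.realize_rel, Function.comp_def] using this

/-- Diagonal elementary embedding into an ultrapower. -/
noncomputable def diagEmb {I : Type*} (U : Ultrafilter I) (P : Type*) [L.Structure P]
    [Nonempty P] : P ↪ₑ[L] ((U : Filter I).Product fun _ : I => P) where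
  toFun := fun p => (↑(fun _ : I => p) : (U : Filter I).Product fun _ => P)
  map_formula' := by
    intro k φ v
    simp only [Function.comp_def]
    show (φ.Realize fun i => (↑(fun _ : I => v i) : (U : Filter I).Product fun _ => P)) ↔ _
    rw [Ultraproduct.realize_formula_cast φ (fun i _ => v i)]
    simp

/-- The transfer hypothesis for the step lemma. -/
def TransferHyp {P : Type*} [L.Structure P] {γ : Type*} (c d : γ → P) : Prop :=
  ∀ (k m : ℕ) (t : Fin k → γ) (ψ : L.BoundedFormula (Fin k) m), ψ.IsQF →
    ∀ p : Fin m → P, ψ.Realize (c ∘ t) p → ∃ q : Fin m → P, ψ.Realize (d ∘ t) q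

/-- An elementary embedding / embedding pair yields the transfer hypothesis. -/
theorem transferHyp_of_pair {Q P : Type*} [L.Structure Q] [L.Structure P]
    (e : Q ↪ₑ[L] P) (f : Q ↪[L] P) : TransferHyp (L := L) (e : Q → P) (f : Q → P) := by
  intro k m t ψ hqf p hreal
  have h1 : ψ.exs.Realize ((e : Q → P) ∘ t) := BoundedFormula.realize_exs.mpr ⟨p, hreal⟩
  have h2 : ψ.exs.Realize t := (e.map_formula ψ.exs t).mp h1
  obtain ⟨q, hq⟩ := BoundedFormula.realize_exs.mp h2
  exact ⟨(f : Q → P) ∘ q, (BoundedFormula.IsQF.realize_embedding hqf f).mpr hq⟩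


/-- Atomic behaviors on `P`. -/
def Beh (L : FirstOrder.Language.{v, w}) (P : Type u) [L.Structure P] : Type u :=
  Σ k : ℕ, {B : (Fin k → P) → Prop // ∃ φ : L.Formula (Fin k), φ.IsAtomic ∧ ∀ z, (B z ↔ φ.Realize z)}

theorem foldr_inf_isQF {α : Type*} {n : ℕ} (l : List (L.BoundedFormula α n))
    (h : ∀ φ ∈ l, φ.IsQF) : (l.foldr (· ⊓ ·) ⊤).IsQF := by
  induction l with
  | nil =>
    exact BoundedFormula.isQF_bot.not
  | cons φ l ih =>
    have h1 : φ.IsQF := h φ List.mem_cons_self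
    have h2 := ih (fun ψ hψ => h ψ (List.mem_cons_of_mem _ hψ))
    exact (h1.imp h2.not).not

theorem exists_approx {P : Type u} [L.Structure P] {γ : Type*} (c d : γ → P)
    (H : TransferHyp (L := L) c d) (G : Finset γ) (F : Finset P) (Φ : Finset (Beh L P)) :
    ∃ h : P → P,
      (∀ g ∈ G, h (c g) = d g) ∧
      (∀ b ∈ Φ, ∀ v : Fin b.1 → P, (∀ l, v l ∈ F) → (b.2.1 (h ∘ v) ↔ b.2.1 v)) := by
  classical
  set k := G.card with hk
  set m := F.card with hm
  set e : Fin k → γ := fun l => (G.equivFin.symm l : γ) with he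
  set uu : Fin m → P := fun j => (F.equivFin.symm j : P) with huu
  have he' : ∀ g ∈ G, ∃ l, e l = g := fun g hg => ⟨G.equivFin ⟨g, hg⟩, by simp [he]⟩
  have huu' : ∀ p ∈ F, ∃ j, uu j = p := fun p hp => ⟨F.equivFin ⟨p, hp⟩, by simp [huu]⟩
  -- the representative formula of a behavior
  let rep : ∀ b : Beh L P, L.Formula (Fin b.1) := fun b => Classical.choose b.2.2
  have hrep : ∀ b : Beh L P, (rep b).IsAtomic ∧ ∀ z, (b.2.1 z ↔ (rep b).Realize z) :=
    fun b => Classical.choose_spec b.2.2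
  -- conjunct for a behavior and a tuple of indices
  let χ : ∀ (b : Beh L P), (Fin b.1 → Fin m) → L.BoundedFormula (Fin k) m := fun b w =>
    BoundedFormula.relabel (fun i => (Sum.inr (w i) : Fin k ⊕ Fin m)) (rep b)
  have hχreal : ∀ (b : Beh L P) (w : Fin b.1 → Fin m) (v : Fin k → P) (xs : Fin m → P),
      ((χ b w).Realize v xs ↔ b.2.1 (xs ∘ w)) := by
    intro b w v xs
    rw [(hrep b).2 (xs ∘ w)]
    have := BoundedFormula.realize_relabel (φ := rep b)
      (g := fun i => (Sum.inr (w i) : Fin k ⊕ Fin m)) (v := v) (xs := xs)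
    rw [this]
    rw [Formula.Realize]
    constructor
    · intro h'
      convert h' using 2 <;> try (funext i; simp [Fin.castAdd]) <;>
        try exact Subsingleton.elim _ _
    · intro h'
      convert h' using 2 <;> try (funext i; simp [Fin.castAdd]) <;>
        try exact Subsingleton.elim _ _
  let conj2 : ∀ (b : Beh L P), (Fin b.1 → Fin m) → L.BoundedFormula (Fin k) m := fun b w =>
    if b.2.1 (uu ∘ w) then χ b w else (χ b w).not
  -- the lists of conjuncts
  let l0 : List (L.BoundedFormula (Fin k) m) :=
    ((Finset.univ : Finset (Fin k × Fin k)).filter (fun lp => c (e lp.1) = c (e lp.2))).toList.map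
      (fun lp => Term.bdEqual (Term.var (Sum.inl lp.1)) (Term.var (Sum.inl lp.2)))
  let l1 : List (L.BoundedFormula (Fin k) m) :=
    ((Finset.univ : Finset (Fin m × Fin k)).filter (fun jl => uu jl.1 = c (e jl.2))).toList.map
      (fun jl => Term.bdEqual (Term.var (Sum.inr jl.1)) (Term.var (Sum.inl jl.2)))
  let l2 : List (L.BoundedFormula (Fin k) m) :=
    Φ.toList.flatMap (fun b =>
      ((Finset.univ : Finset (Fin b.1 → Fin m)).toList).map (fun w => conj2 b w))
  set ψ : L.BoundedFormula (Fin k) m := (l0 ++ l1 ++ l2).foldr (· ⊓ ·) ⊤ with hψ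
  have hqf : ψ.IsQF := by
    apply foldr_inf_isQF
    intro φ hφ
    simp only [List.mem_append, l0, l1, l2, List.mem_map, List.mem_flatMap] at hφ
    rcases hφ with ((⟨lp, _, rfl⟩ | ⟨jl, _, rfl⟩) | ⟨b, _, w, _, rfl⟩)
    · exact (BoundedFormula.IsAtomic.equal _ _).isQF
    · exact (BoundedFormula.IsAtomic.equal _ _).isQF
    · simp only [conj2]
      split
      · exact ((hrep b).1.relabel _).isQF
      · exact ((hrep b).1.relabel _).isQF.not
  have hreal : ψ.Realize (c ∘ e) uu := by
    rw [hψ, BoundedFormula.realize_foldr_inf]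
    intro φ hφ
    simp only [List.mem_append, l0, l1, l2, List.mem_map, List.mem_flatMap] at hφ
    rcases hφ with ((⟨lp, hlp, rfl⟩ | ⟨jl, hjl, rfl⟩) | ⟨b, _, w, _, rfl⟩)
    · simp only [Finset.mem_toList, Finset.mem_filter] at hlp
      simp only [BoundedFormula.realize_bdEqual, Term.realize_var, Sum.elim_inl,
        Function.comp_apply]
      exact hlp.2
    · simp only [Finset.mem_toList, Finset.mem_filter] at hjl
      simp only [BoundedFormula.realize_bdEqual, Term.realize_var, Sum.elim_inl, Sum.elim_inr,
        Function.comp_apply]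
      exact hjl.2
    · simp only [conj2]
      split_ifs with hb
      · exact (hχreal b w _ uu).mpr ((by exact hb))
      · rw [BoundedFormula.realize_not]
        exact fun hcon => hb ((hχreal b w _ uu).mp hcon)
  obtain ⟨q, hq⟩ := H k m e ψ hqf uu hreal
  rw [hψ, BoundedFormula.realize_foldr_inf] at hq
  have fact0 : ∀ l₁ l₂ : Fin k, c (e l₁) = c (e l₂) → d (e l₁) = d (e l₂) := by
    intro l₁ l₂ hcc
    have := hq _ (by
      simp only [List.mem_append, l0, List.mem_map]
      exact Or.inl (Or.inl ⟨(l₁, l₂), by simp [hcc], rfl⟩))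
    simpa using this
  have fact1 : ∀ (j : Fin m) (l : Fin k), uu j = c (e l) → q j = d (e l) := by
    intro j l hcc
    have := hq _ (by
      simp only [List.mem_append, l1, List.mem_map]
      exact Or.inl (Or.inr ⟨(j, l), by simp [hcc], rfl⟩))
    simpa using this
  have fact2 : ∀ b ∈ Φ, ∀ w : Fin b.1 → Fin m, (b.2.1 (q ∘ w) ↔ b.2.1 (uu ∘ w)) := by
    intro b hb w
    have := hq _ (by
      simp only [List.mem_append, l2, List.mem_flatMap, List.mem_map]
      exact Or.inr ⟨b, by simp [hb], w, by simp, rfl⟩)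
    simp only [conj2] at this
    split_ifs at this with hbw
    · rw [hχreal b w _ q] at this
      simp [this, hbw]
    · rw [BoundedFormula.realize_not, hχreal b w _ q] at this
      simp [this, hbw]
  refine ⟨fun p => if hp : ∃ j, uu j = p then q (Classical.choose hp)
    else if hg : ∃ g, g ∈ G ∧ c g = p then d (Classical.choose hg) else p, ?_, ?_⟩
  · intro g hg
    obtain ⟨l, hl⟩ := he' g hg
    by_cases hp : ∃ j, uu j = c g
    · simp only [dif_pos hp]
      have := fact1 (Classical.choose hp) l (by rw [Classical.choose_spec hp, hl])
      rw [this, hl]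
    · have hgg : ∃ g', g' ∈ G ∧ c g' = c g := ⟨g, hg, rfl⟩
      simp only [dif_neg hp, dif_pos hgg]
      obtain ⟨l₀, hl₀⟩ := he' _ (Classical.choose_spec hgg).1
      have := fact0 l₀ l (by rw [hl₀, hl]; exact (Classical.choose_spec hgg).2)
      rw [← hl₀, ← hl]
      exact this
  · intro b hb v hv
    have hv' : ∀ l, ∃ j, uu j = v l := fun l => huu' _ (hv l)
    set w : Fin b.1 → Fin m := fun l => Classical.choose (hv' l) with hw
    have huw : uu ∘ w = v := funext fun l => Classical.choose_spec (hv' l)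
    have hhv : (fun p => if hp : ∃ j, uu j = p then q (Classical.choose hp)
        else if hg : ∃ g, g ∈ G ∧ c g = p then d (Classical.choose hg) else p) ∘ v = q ∘ w := by
      funext l
      show (if hp : ∃ j, uu j = v l then q (Classical.choose hp)
        else if hg : ∃ g, g ∈ G ∧ c g = v l then d (Classical.choose hg) else v l) = q (w l)
      rw [dif_pos (hv' l)]
    rw [hhv, ← huw]
    exact fact2 b hb w



theorem exists_extension {P : Type u} [L.Structure P] [Nonempty P] {γ : Type u}
    (c d : γ → P) (H : TransferHyp (L := L) c d) :
    ∃ (N : Type u) (iN : L.Structure N), Nonempty N ∧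
      ∃ (j : P ↪ₑ[L] N) (f : P ↪[L] N), ∀ i, f (c i) = j (d i) := by
  classical
  let I : Type u := Finset γ × Finset P × Finset (Beh L P)
  let U : Ultrafilter I := Ultrafilter.of atTop
  have hU : ∀ i₀ : I, {i | i₀ ≤ i} ∈ U := fun i₀ =>
    Ultrafilter.of_le atTop (Filter.Ici_mem_atTop i₀)
  choose happ hspec1 hspec2 using fun i : I => exists_approx c d H i.1 i.2.1 i.2.2
  have hat : ∀ (k : ℕ) (φ : L.Formula (Fin k)), φ.IsAtomic → ∀ v : Fin k → P,
      (φ.Realize ((fun p => (↑(fun i => happ i p) : (U : Filter I).Product fun _ => P)) ∘ v)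
        ↔ φ.Realize v) := by
    intro k φ hatomic v
    simp only [Function.comp_def]
    rw [Ultraproduct.realize_formula_cast (u := U) φ (fun l i => happ i (v l))]
    set b : Beh L P := ⟨k, ⟨fun z => φ.Realize z, φ, hatomic, fun _ => Iff.rfl⟩⟩ with hb
    have hS : ∀ᶠ i : I in (U : Filter I), b ∈ i.2.2 ∧ ∀ l, v l ∈ i.2.1 := by
      refine Filter.mem_of_superset (hU (⊥, Finset.univ.image v, {b})) ?_
      rintro ⟨iG, iF, iΦ⟩ hi
      obtain ⟨-, h2, h3⟩ : (⊥ : Finset γ) ≤ iG ∧ Finset.univ.image v ≤ iF ∧ {b} ≤ iΦ := by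
        exact ⟨hi.1, hi.2.1, hi.2.2⟩
      exact ⟨h3 (Finset.mem_singleton_self b), fun l => h2 (Finset.mem_image_of_mem v (Finset.mem_univ l))⟩
    constructor
    · intro hev
      obtain ⟨i, hφi, hbi, hvF⟩ := (hev.and hS).exists
      exact (hspec2 i b hbi v hvF).mp hφi
    · intro hv
      refine Filter.mem_of_superset hS ?_
      intro i hi
      exact (hspec2 i b hi.1 v hi.2).mpr hv
  refine ⟨(U : Filter I).Product fun _ => P, inferInstance, inferInstance, diagEmb U P,
    embeddingOfAtomic (fun p => (↑(fun i => happ i p) : (U : Filter I).Product fun _ => P)) hat,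
    ?_⟩
  intro g
  show (↑(fun i => happ i (c g)) : (U : Filter I).Product fun _ => P) = (↑(fun _ : I => d g) : (U : Filter I).Product fun _ => P)
  apply Quotient.sound'
  show ∀ᶠ i : I in (U : Filter I), happ i (c g) = d g
  refine Filter.mem_of_superset (hU ({g}, ⊥, ⊥)) ?_
  intro i hi
  exact hspec1 i g (hi.1 (Finset.mem_singleton_self g))


/-- The state of the chain construction. -/
structure ChainSt (L : FirstOrder.Language.{v, w}) : Type (max (u + 1) v w) where
  Q : Type u
  P : Type u
  iQ : L.Structure Q
  iP : L.Structure P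
  neQ : Nonempty Q
  neP : Nonempty P
  e : @ElementaryEmbedding L Q P iQ iP
  f : @Embedding L Q P iQ iP

attribute [instance] ChainSt.iQ ChainSt.iP ChainSt.neQ ChainSt.neP

/-- Data for one step of the chain. -/
noncomputable def stepPack (s : ChainSt.{u} L) :
    Σ' (N : Type u) (iN : L.Structure N) (_ : Nonempty N)
      (j : @ElementaryEmbedding L s.P N s.iP iN) (f : @Embedding L s.P N s.iP iN),
      ∀ x : s.Q, f (s.e x) = j (s.f x) := by
  apply Classical.choice
  obtain ⟨N, iN, hne, j, f, hf⟩ :=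
    exists_extension (P := s.P) (γ := s.Q) (s.e : s.Q → s.P) (s.f : s.Q → s.P)
      (transferHyp_of_pair s.e s.f)
  exact ⟨⟨N, iN, hne, j, f, hf⟩⟩

/-- One step of the chain. -/
noncomputable def step (s : ChainSt.{u} L) : ChainSt.{u} L where
  Q := s.P
  P := (stepPack s).1
  iQ := s.iP
  iP := (stepPack s).2.1
  neQ := s.neP
  neP := (stepPack s).2.2.1
  e := (stepPack s).2.2.2.1
  f := (stepPack s).2.2.2.2.1

theorem step_prop (s : ChainSt.{u} L) :
    ∀ x : s.Q, (step s).f (s.e x) = (step s).e (s.f x) :=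
  (stepPack s).2.2.2.2.2

/-- The chain. -/
noncomputable def chain (base : ChainSt.{u} L) : ℕ → ChainSt.{u} L
  | 0 => base
  | (n + 1) => step (chain base n)


section Limit

open FirstOrder.Language.DirectedSystem FirstOrder.Language.DirectLimit

variable (base : ChainSt.{u} L)

/-- The carriers of the chain. -/
noncomputable def Gc (i : ℕ) : Type u := (chain base i).Q

noncomputable instance iGc (i : ℕ) : L.Structure (Gc base i) := (chain base i).iQ

instance neGc (i : ℕ) : Nonempty (Gc base i) := (chain base i).neQ

/-- The elementary embeddings along the chain. -/
noncomputable def eStep (i : ℕ) : Gc base i ↪ₑ[L] Gc base (i + 1) := (chain base i).e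

/-- The extension embeddings along the chain. -/
noncomputable def fStep (i : ℕ) : Gc base i ↪[L] Gc base (i + 1) := (chain base i).f

theorem compat (i : ℕ) (x : Gc base i) :
    fStep base (i + 1) (eStep base i x) = eStep base (i + 1) (fStep base i x) :=
  step_prop (chain base i) x

/-- The directed system of embeddings. -/
noncomputable def fn : ∀ i j : ℕ, i ≤ j → (Gc base i ↪[L] Gc base j) :=
  natLERec (fun n => (eStep base n).toEmbedding)

noncomputable instance : DirectedSystem (Gc base) (fun i j h => fn base i j h) :=
  natLERec.directedSystem _

theorem fn_succ (j : ℕ) (h : j ≤ j + 1) (x : Gc base j) :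
    fn base j (j + 1) h x = eStep base j x := by
  have h1 := coe_natLERec (fun n => (eStep base n).toEmbedding) j (j+1) h
  calc fn base j (j+1) h x
      = Nat.leRecOn h (@fun k => ((eStep base k).toEmbedding : Gc base k → Gc base (k+1))) x := by
        show (fn base j (j+1) h) x = _
        rw [show fn base j (j+1) h = natLERec (fun n => (eStep base n).toEmbedding) j (j+1) h
          from rfl, h1]
    _ = eStep base j x := by rw [Nat.leRecOn_succ']; rfl

theorem fn_realize {α : Type*} {k : ℕ} (φ : L.BoundedFormula α k) (i j : ℕ) (hij : i ≤ j)
    (v : α → Gc base i) (xs : Fin k → Gc base i) :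
    φ.Realize (fn base i j hij ∘ v) (fn base i j hij ∘ xs) ↔ φ.Realize v xs := by
  induction j, hij using Nat.le_induction with
  | base =>
    have h1 : ∀ x, fn base i i le_rfl x = x := fun x => FirstOrder.Language.DirectedSystem.map_self (fn base) x
    have h2 : fn base i i le_rfl ∘ v = v := funext fun l => h1 _
    have h3 : fn base i i le_rfl ∘ xs = xs := funext fun l => h1 _
    rw [show (fn base i i (le_refl i)) = fn base i i le_rfl from rfl, h2, h3]
  | succ j hij ih =>
    have h1 : ∀ x, fn base i (j+1) (by omega) x = eStep base j (fn base i j hij x) := by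
      intro x
      rw [← fn_succ base j (Nat.le_succ j) (fn base i j hij x)]
      rw [FirstOrder.Language.DirectedSystem.map_map (fn base) hij (Nat.le_succ j) x]
    have h2 : fn base i (j+1) (by omega) ∘ v = (eStep base j) ∘ (fn base i j hij ∘ v) :=
      funext fun l => h1 _
    have h3 : fn base i (j+1) (by omega) ∘ xs = (eStep base j) ∘ (fn base i j hij ∘ xs) :=
      funext fun l => h1 _
    rw [show fn base i (j+1) (Nat.le_succ_of_le hij) = fn base i (j+1) (by omega) from rfl,
      h2, h3, (eStep base j).map_boundedFormula]
    exact ih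

theorem of_realize {α : Type*} : ∀ {k : ℕ} (φ : L.BoundedFormula α k) (i : ℕ) (v : α → Gc base i)
    (xs : Fin k → Gc base i),
    (φ.Realize (of L ℕ (Gc base) (fn base) i ∘ v) (of L ℕ (Gc base) (fn base) i ∘ xs)
      ↔ φ.Realize v xs) := by
  intro k φ
  induction φ with
  | falsum => exact fun i v xs => Iff.rfl
  | equal t1 t2 =>
    exact fun i v xs => BoundedFormula.IsQF.realize_embedding
      (BoundedFormula.IsAtomic.equal t1 t2).isQF (of L ℕ (Gc base) (fn base) i)
  | rel R ts =>
    exact fun i v xs => BoundedFormula.IsQF.realize_embedding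
      (BoundedFormula.IsAtomic.rel R ts).isQF (of L ℕ (Gc base) (fn base) i)
  | imp φ1 φ2 ih1 ih2 =>
    intro i v xs
    simp only [BoundedFormula.realize_imp, ih1, ih2]
  | all φ ih =>
    intro i v xs
    rw [BoundedFormula.realize_all, BoundedFormula.realize_all]
    constructor
    · intro hN y
      have h1 := hN (of L ℕ (Gc base) (fn base) i y)
      rw [← Fin.comp_snoc] at h1
      exact (ih i v (Fin.snoc xs y)).mp h1
    · intro hG z
      obtain ⟨j, y, rfl⟩ := exists_of z
      have hil : i ≤ max i j := le_max_left i j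
      have hjl : j ≤ max i j := le_max_right i j
      have hGall : φ.all.Realize v xs := BoundedFormula.realize_all.mpr hG
      have h2 : φ.all.Realize (fn base i (max i j) hil ∘ v) (fn base i (max i j) hil ∘ xs) :=
        (fn_realize base φ.all i (max i j) hil v xs).mpr hGall
      have h3 := BoundedFormula.realize_all.mp h2 (fn base j (max i j) hjl y)
      have h4 := (ih (max i j) (fn base i (max i j) hil ∘ v)
        (Fin.snoc (fn base i (max i j) hil ∘ xs) (fn base j (max i j) hjl y))).mpr h3
      rw [Fin.comp_snoc] at h4
      have h5 : of L ℕ (Gc base) (fn base) (max i j) ∘ (fn base i (max i j) hil ∘ v)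
          = of L ℕ (Gc base) (fn base) i ∘ v := funext fun l => of_f
      have h6 : of L ℕ (Gc base) (fn base) (max i j) ∘ (fn base i (max i j) hil ∘ xs)
          = of L ℕ (Gc base) (fn base) i ∘ xs := funext fun l => of_f
      have h7 : of L ℕ (Gc base) (fn base) (max i j) (fn base j (max i j) hjl y)
          = of L ℕ (Gc base) (fn base) j y := of_f
      rw [h5, h6, h7] at h4
      exact h4

/-- The canonical elementary embedding of the base of the chain into the limit. -/
noncomputable def gElem : Gc base 0 ↪ₑ[L] Language.DirectLimit (Gc base) (fn base) where
  toFun := of L ℕ (Gc base) (fn base) 0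
  map_formula' := by
    intro k φ v
    have := of_realize base (k := 0) φ 0 v (fun x => Fin.elim0 x)
    rw [Formula.Realize, Formula.Realize]
    convert this using 2 <;> exact Subsingleton.elim _ _

/-- The limit embedding. -/
noncomputable def FEmb : Language.DirectLimit (Gc base) (fn base) ↪[L] Language.DirectLimit (Gc base) (fn base) :=
  Language.DirectLimit.lift L ℕ (Gc base) (fn base)
    (fun i => (of L ℕ (Gc base) (fn base) (i + 1)).comp (fStep base i))
    (by
      intro i j hij x
      induction j, hij using Nat.le_induction with
      | base =>
        rw [FirstOrder.Language.DirectedSystem.map_self (fn base) x]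
      | succ j hij ih =>
        have h1 : fn base i (j+1) (Nat.le_succ_of_le hij) x
            = eStep base j (fn base i j hij x) := by
          rw [← fn_succ base j (Nat.le_succ j) (fn base i j hij x)]
          rw [FirstOrder.Language.DirectedSystem.map_map (fn base) hij (Nat.le_succ j) x]
        rw [h1]
        simp only [Embedding.comp_apply]
        rw [compat base j (fn base i j hij x)]
        have h2 : of L ℕ (Gc base) (fn base) (j + 1 + 1)
            (eStep base (j+1) (fStep base j (fn base i j hij x)))
            = of L ℕ (Gc base) (fn base) (j + 1) (fStep base j (fn base i j hij x)) := by
          rw [← fn_succ base (j+1) (Nat.le_succ (j+1))]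
          exact of_f
        rw [h2]
        exact ih)

theorem exists_limit :
    ∃ (N : Type u) (iN : L.Structure N)
      (g : @ElementaryEmbedding L base.Q N base.iQ iN) (F : @Embedding L N N iN iN),
      ∀ x y : base.Q, base.f x = base.e y → F (g x) = g y := by
  refine ⟨Language.DirectLimit (Gc base) (fn base), inferInstance, gElem base, FEmb base, ?_⟩
  intro x y hxy
  show FEmb base (of L ℕ (Gc base) (fn base) 0 x) = of L ℕ (Gc base) (fn base) 0 y
  rw [show FEmb base (of L ℕ (Gc base) (fn base) 0 x)
      = ((of L ℕ (Gc base) (fn base) 1).comp (fStep base 0)) x from lift_of _ _ _]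
  show of L ℕ (Gc base) (fn base) 1 (fStep base 0 x) = _
  have h1 : fStep base 0 x = eStep base 0 y := hxy
  rw [h1, ← fn_succ base 0 (Nat.le_succ 0) y]
  exact of_f

end Limit


theorem baseTransfer {M : Type u} [L.Structure M] (A : Set M) {n : ℕ} (a b : Fin n → M)
    (hab : ∀ φ : L.Formula (↥A ⊕ Fin n), IsExistential φ →
        φ.Realize (Sum.elim Subtype.val a) → φ.Realize (Sum.elim Subtype.val b)) :
    TransferHyp (L := L) (Sum.elim (Subtype.val : ↥A → M) a) (Sum.elim Subtype.val b) := by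
  intro k m t ψ hqf p hp
  let χ : L.BoundedFormula (↥A ⊕ Fin n) (0 + m) :=
    BoundedFormula.relabel (fun i => (Sum.inl (t i) : (↥A ⊕ Fin n) ⊕ Fin 0)) ψ
  have hχqf : χ.IsQF := hqf.relabel _
  have hreal : ∀ (v : (↥A ⊕ Fin n) → M) (xs : Fin (0 + m) → M),
      (χ.Realize v xs ↔ ψ.Realize (v ∘ t) (xs ∘ Fin.natAdd 0)) := by
    intro v xs
    rw [show χ = BoundedFormula.relabel (fun i => (Sum.inl (t i) : (↥A ⊕ Fin n) ⊕ Fin 0)) ψ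
      from rfl, BoundedFormula.realize_relabel]
    exact Iff.rfl
  have hx : (p ∘ Fin.cast (Nat.zero_add m)) ∘ Fin.natAdd 0 = p := by
    funext l
    refine congrArg p ?_
    ext
    simp
  have h1 : (χ.exs).Realize (Sum.elim Subtype.val a) := by
    rw [BoundedFormula.realize_exs]
    refine ⟨p ∘ Fin.cast (Nat.zero_add m), (hreal _ _).mpr ?_⟩
    rw [hx]
    exact hp
  have h2 := hab χ.exs ⟨0 + m, χ, hχqf, rfl⟩ h1
  rw [BoundedFormula.realize_exs] at h2
  obtain ⟨xs, hxs⟩ := h2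
  exact ⟨xs ∘ Fin.natAdd 0, (hreal _ _).mp hxs⟩

end StepAux

end StepAuxSection

universe u

/-- Let `M` be an `L`-structure, `A ⊆ M` and `ā, b̄ ∈ Mⁿ`. Then
`tp^∃(ā/A) ⊆ tp^∃(b̄/A)` if and only if there exist an elementary extension `N` of `M`
and an `L`-embedding `f : N → N` fixing `A` pointwise and sending `ā` to `b̄`. -/
theorem existential_type_subset_iff_embedding {L : FirstOrder.Language} {M : Type u}
    [L.Structure M] (A : Set M) {n : ℕ} (a b : Fin n → M) :
    (∀ φ : L.Formula (↥A ⊕ Fin n), IsExistential φ →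
        φ.Realize (Sum.elim Subtype.val a) → φ.Realize (Sum.elim Subtype.val b)) ↔
    ∃ (N : Type u) (iN : L.Structure N)
      (g : @FirstOrder.Language.ElementaryEmbedding L M N _ iN)
      (f : @FirstOrder.Language.Embedding L N N iN iN),
      (∀ x ∈ A, f (g x) = g x) ∧ ∀ i, f (g (a i)) = g (b i) := by
  constructor
  · intro hab
    by_cases hne : Nonempty M
    · obtain ⟨N₁, iN₁, hne₁, j₀, f₀, hf₀⟩ :=
        StepAux.exists_extension (P := M) (γ := ↥A ⊕ Fin n)
          (Sum.elim (Subtype.val : ↥A → M) a) (Sum.elim Subtype.val b)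
          (StepAux.baseTransfer A a b hab)
      obtain ⟨N, iN, g, F, hFg⟩ :=
        StepAux.exists_limit (StepAux.ChainSt.mk M N₁ inferInstance iN₁ hne hne₁ j₀ f₀)
      refine ⟨N, iN, g, F, fun x hx => hFg x x ?_, fun i => hFg (a i) (b i) ?_⟩
      · exact hf₀ (Sum.inl ⟨x, hx⟩)
      · exact hf₀ (Sum.inr i)
    · haveI : IsEmpty M := not_nonempty_iff.mp hne
      exact ⟨M, inferInstance, FirstOrder.Language.ElementaryEmbedding.refl L M,
        FirstOrder.Language.Embedding.refl L M, fun x _ => rfl, fun i => isEmptyElim (a i)⟩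
  · rintro ⟨N, iN, g, f, hA, hab'⟩ φ hφ hφa
    obtain ⟨m, ψ, hqf, rfl⟩ := hφ
    have h1 : ψ.exs.Realize ((g : M → N) ∘ Sum.elim Subtype.val a) :=
      (g.map_formula ψ.exs (Sum.elim Subtype.val a)).mpr hφa
    rw [FirstOrder.Language.BoundedFormula.realize_exs] at h1
    obtain ⟨xs, hxs⟩ := h1
    have h2 : ψ.Realize ((f : N → N) ∘ ((g : M → N) ∘ Sum.elim Subtype.val a))
        ((f : N → N) ∘ xs) :=
      (FirstOrder.Language.BoundedFormula.IsQF.realize_embedding hqf f).mpr hxs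
    have h3 : (f : N → N) ∘ ((g : M → N) ∘ Sum.elim (Subtype.val : ↥A → M) a)
        = (g : M → N) ∘ Sum.elim (Subtype.val : ↥A → M) b := by
      funext x
      cases x with
      | inl xa => exact hA xa.1 xa.2
      | inr i => exact hab' i
    rw [h3] at h2
    have h4 : ψ.exs.Realize ((g : M → N) ∘ Sum.elim Subtype.val b) :=
      FirstOrder.Language.BoundedFormula.realize_exs.mpr ⟨(f : N → N) ∘ xs, h2⟩
    exact (g.map_formula ψ.exs (Sum.elim Subtype.val b)).mp h4
end
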